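/- arXiv:math/9909138 — 9 statements merged into one kernel-verified Lean document; each statement's English description precedes it below -/
import Mathlib

section
/- Let Δ ⊆ ℂ² be open, x : Δ → ℂ⁵ holomorphic, and p ∈ Δ a point at which x(p), x_u(p), x_v(p) are linearly independent; set Π(p) = span_ℂ{x(p), x_u(p), x_v(p)}. Assume the six vectors x(p), x_u(p), x_v(p), x_uu(p), x_uv(p), x_vv(p) span ℂ⁵. Suppose there exist λ, μ ∈ ℂ with λ ≠ μ such that x_uu(p) + (λ+μ)·x_uv(p) + λμ·x_vv(p) ∈ Π(p) (conjugate double system condition at p). Then: (1) the set of points Q = α·x(p) + β·x_u(p) + γ·x_v(p) of Π(p) that are first-order focal for some nonzero direction equals span_ℂ{x(p), x_u(p)+λ·x_v(p)} ∪ span_ℂ{x(p), x_u(p)+μ·x_v(p)}, a union of two distinct 2-dimensional subspaces (two distinct lines of ℙ⁴ through the point x(p)); (2) the set of focal points for the direction (1, λ) is exactly span_ℂ{x(p), x_u(p)+μ·x_v(p)}, the set of focal points for the direction (1, μ) is exactly span_ℂ{x(p), x_u(p)+λ·x_v(p)}; and (3) for every nonzero direction not proportional to (1, λ) or (1, μ),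 the set of focal points is exactly span_ℂ{x(p)}. -/
open Submodule


/-- Partial derivative with respect to the first coordinate `u` of `ℂ²`. -/
noncomputable def Du (f : ℂ × ℂ → (Fin 5 → ℂ)) : ℂ × ℂ → (Fin 5 → ℂ) :=
  fun p => fderiv ℂ f p ((1 : ℂ), (0 : ℂ))

/-- Partial derivative with respect to the second coordinate `v` of `ℂ²`. -/
noncomputable def Dv (f : ℂ × ℂ → (Fin 5 → ℂ)) : ℂ × ℂ → (Fin 5 → ℂ) :=
  fun p => fderiv ℂ f p ((0 : ℂ), (1 : ℂ))

/-- The point `α • x p + β • x_u p + γ • x_v p` of the tangent plane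
`Π(p) = span {x p, x_u p, x_v p}` is a first-order focal point for the
direction `w = (w₁, w₂)`. -/
def IsFocal (x : ℂ × ℂ → (Fin 5 → ℂ)) (p : ℂ × ℂ) (w : ℂ × ℂ) (β γ : ℂ) : Prop :=
  β • (w.1 • Du (Du x) p + w.2 • Du (Dv x) p) +
    γ • (w.1 • Du (Dv x) p + w.2 • Dv (Dv x) p)
      ∈ Submodule.span ℂ ({x p, Du x p, Dv x p} : Set (Fin 5 → ℂ))

lemma aux_indep5 (A B C S T V : Fin 5 → ℂ) (lam mu : ℂ)
    (hspan : span ℂ ({A,B,C,S,T,V} : Set (Fin 5 → ℂ)) = ⊤)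
    (hconj : S + (lam+mu)•T + (lam*mu)•V ∈ span ℂ ({A,B,C} : Set (Fin 5 → ℂ))) :
    LinearIndependent ℂ ![A,B,C,T,V] := by
  have hrange : Set.range ![A,B,C,T,V] = {A,B,C,T,V} := by
    ext z; simp [Matrix.range_cons, Matrix.range_empty]; tauto
  apply linearIndependent_of_top_le_span_of_card_eq_finrank
  · rw [hrange, ← hspan]
    apply Submodule.span_le.2
    intro z hz
    have hsub : span ℂ ({A,B,C} : Set (Fin 5 → ℂ)) ≤ span ℂ ({A,B,C,T,V} : Set (Fin 5 → ℂ)) := by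
      apply Submodule.span_mono; intro y hy
      simp only [Set.mem_insert_iff, Set.mem_singleton_iff] at hy ⊢; tauto
    have hT : T ∈ span ℂ ({A,B,C,T,V} : Set (Fin 5 → ℂ)) := subset_span (by simp)
    have hV : V ∈ span ℂ ({A,B,C,T,V} : Set (Fin 5 → ℂ)) := subset_span (by simp)
    have hS : S ∈ span ℂ ({A,B,C,T,V} : Set (Fin 5 → ℂ)) := by
      have h1 := hsub hconj
      have h2 : S = (S + (lam+mu)•T + (lam*mu)•V) - (lam+mu)•T - (lam*mu)•V := by abel
      rw [h2]
      exact Submodule.sub_mem _ (Submodule.sub_mem _ h1 (Submodule.smul_mem _ _ hT))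
        (Submodule.smul_mem _ _ hV)
    simp only [Set.mem_insert_iff, Set.mem_singleton_iff] at hz
    rcases hz with h|h|h|h|h|h <;> subst h
    · exact subset_span (by simp)
    · exact subset_span (by simp)
    · exact subset_span (by simp)
    · exact hS
    · exact hT
    · exact hV
  · simp

lemma aux_TV (A B C T V : Fin 5 → ℂ)
    (hI : LinearIndependent ℂ ![A,B,C,T,V]) (b' c' : ℂ)
    (hmem : b'•T + c'•V ∈ span ℂ ({A,B,C} : Set (Fin 5 → ℂ))) : b' = 0 ∧ c' = 0 := by
  have hr : ({A,B,C} : Set (Fin 5 → ℂ)) = Set.range ![A,B,C] := by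
    ext z; simp [Matrix.range_cons, Matrix.range_empty]; tauto
  rw [hr, mem_span_range_iff_exists_fun] at hmem
  obtain ⟨g, hg⟩ := hmem
  have h0 : ∑ i, (![g 0, g 1, g 2, -b', -c'] i) • (![A,B,C,T,V] i) = 0 := by
    simp [Fin.sum_univ_five, Fin.sum_univ_three] at hg ⊢
    linear_combination (norm := module) hg
  have h := Fintype.linearIndependent_iff.1 hI _ h0
  have h3 := h 3
  have h4 := h 4
  simp at h3 h4
  exact ⟨h3, h4⟩

lemma aux_L (A B C S T V : Fin 5 → ℂ) (lam mu : ℂ)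
    (hI : LinearIndependent ℂ ![A,B,C,T,V])
    (hconj : S + (lam+mu)•T + (lam*mu)•V ∈ span ℂ ({A,B,C} : Set (Fin 5 → ℂ)))
    (a b c : ℂ) :
    a•S + b•T + c•V ∈ span ℂ ({A,B,C} : Set (Fin 5 → ℂ)) ↔
      b = a*(lam+mu) ∧ c = a*(lam*mu) := by
  constructor
  · intro h
    have h2 : (b - a*(lam+mu))•T + (c - a*(lam*mu))•V ∈ span ℂ ({A,B,C} : Set (Fin 5 → ℂ)) := by
      have h1 := Submodule.sub_mem _ h (Submodule.smul_mem _ a hconj)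
      have heq : a•S + b•T + c•V - a•(S + (lam+mu)•T + (lam*mu)•V)
          = (b - a*(lam+mu))•T + (c - a*(lam*mu))•V := by module
      rwa [heq] at h1
    obtain ⟨e1, e2⟩ := aux_TV A B C T V hI _ _ h2
    exact ⟨by linear_combination e1, by linear_combination e2⟩
  · rintro ⟨hb, hc⟩
    subst hb hc
    have heq : a•S + (a*(lam+mu))•T + (a*(lam*mu))•V = a•(S + (lam+mu)•T + (lam*mu)•V) := by
      module
    rw [heq]
    exact Submodule.smul_mem _ a hconj

lemma aux_pair_indep (A B C : Fin 5 → ℂ) (c : ℂ)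
    (hindep : LinearIndependent ℂ ![A, B, C]) :
    LinearIndependent ℂ ![A, B + c•C] := by
  rw [Fintype.linearIndependent_iff]
  intro g hg
  have h0 : ∑ i, (![g 0, g 1, g 1 * c] i) • (![A,B,C] i) = 0 := by
    simp [Fin.sum_univ_three, Fin.sum_univ_two] at hg ⊢
    linear_combination (norm := module) hg
  have h := Fintype.linearIndependent_iff.1 hindep _ h0
  intro i
  fin_cases i
  · exact h 0
  · exact h 1

lemma aux_rank2 (A B C : Fin 5 → ℂ) (c : ℂ)
    (hindep : LinearIndependent ℂ ![A, B, C]) :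
    Module.finrank ℂ (span ℂ ({A, B + c•C} : Set (Fin 5 → ℂ))) = 2 := by
  have hr : ({A, B + c•C} : Set (Fin 5 → ℂ)) = Set.range ![A, B + c•C] := by
    ext z; simp [Matrix.range_cons, Matrix.range_empty]; tauto
  rw [hr, finrank_span_eq_card (aux_pair_indep A B C c hindep)]
  simp

/-- β₁-congruences: a conjugate double system condition at `p` makes the focal conic
a pair of two distinct lines through `x p`, the two conjugate directions being the
developable ones, and all other directions having `x p` as their only focal point. -/
theorem conjugate_double_system_focal_conic
    (Δ : Set (ℂ × ℂ)) (hΔ : IsOpen Δ)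
    (x : ℂ × ℂ → (Fin 5 → ℂ)) (hx : DifferentiableOn ℂ x Δ)
    (p : ℂ × ℂ) (hp : p ∈ Δ)
    (hindep : LinearIndependent ℂ ![x p, Du x p, Dv x p])
    (hspan : Submodule.span ℂ
      ({x p, Du x p, Dv x p, Du (Du x) p, Du (Dv x) p, Dv (Dv x) p} : Set (Fin 5 → ℂ)) = ⊤)
    (lam mu : ℂ) (hne : lam ≠ mu)
    (hconj : Du (Du x) p + (lam + mu) • Du (Dv x) p + (lam * mu) • Dv (Dv x) p
      ∈ Submodule.span ℂ ({x p, Du x p, Dv x p} : Set (Fin 5 → ℂ))) :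
    -- (1) the focal locus is the union of two distinct lines through x p
    ({Q : Fin 5 → ℂ | ∃ α β γ : ℂ,
        Q = α • x p + β • Du x p + γ • Dv x p ∧
        ∃ w : ℂ × ℂ, w ≠ 0 ∧ IsFocal x p w β γ}
      = (Submodule.span ℂ ({x p, Du x p + lam • Dv x p} : Set (Fin 5 → ℂ)) : Set (Fin 5 → ℂ))
        ∪ (Submodule.span ℂ ({x p, Du x p + mu • Dv x p} : Set (Fin 5 → ℂ)) : Set (Fin 5 → ℂ))) ∧
    Submodule.span ℂ ({x p, Du x p + lam • Dv x p} : Set (Fin 5 → ℂ))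
      ≠ Submodule.span ℂ ({x p, Du x p + mu • Dv x p} : Set (Fin 5 → ℂ)) ∧
    Module.finrank ℂ
      (Submodule.span ℂ ({x p, Du x p + lam • Dv x p} : Set (Fin 5 → ℂ))) = 2 ∧
    Module.finrank ℂ
      (Submodule.span ℂ ({x p, Du x p + mu • Dv x p} : Set (Fin 5 → ℂ))) = 2 ∧
    -- (2) the focal points for the directions (1, lam) and (1, mu)
    ({Q : Fin 5 → ℂ | ∃ α β γ : ℂ,
        Q = α • x p + β • Du x p + γ • Dv x p ∧ IsFocal x p ((1 : ℂ), lam) β γ}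
      = (Submodule.span ℂ ({x p, Du x p + mu • Dv x p} : Set (Fin 5 → ℂ)) : Set (Fin 5 → ℂ))) ∧
    ({Q : Fin 5 → ℂ | ∃ α β γ : ℂ,
        Q = α • x p + β • Du x p + γ • Dv x p ∧ IsFocal x p ((1 : ℂ), mu) β γ}
      = (Submodule.span ℂ ({x p, Du x p + lam • Dv x p} : Set (Fin 5 → ℂ)) : Set (Fin 5 → ℂ))) ∧
    -- (3) the focal points for any other direction
    ∀ w : ℂ × ℂ, w ≠ 0 → (∀ c : ℂ, w ≠ c • ((1 : ℂ), lam)) →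
      (∀ c : ℂ, w ≠ c • ((1 : ℂ), mu)) →
      {Q : Fin 5 → ℂ | ∃ α β γ : ℂ,
          Q = α • x p + β • Du x p + γ • Dv x p ∧ IsFocal x p w β γ}
        = (Submodule.span ℂ ({x p} : Set (Fin 5 → ℂ)) : Set (Fin 5 → ℂ)) := by
  have hI : LinearIndependent ℂ ![x p, Du x p, Dv x p, Du (Dv x) p, Dv (Dv x) p] :=
    aux_indep5 _ _ _ _ _ _ lam mu hspan hconj
  have key : ∀ (w : ℂ × ℂ) (β γ : ℂ), IsFocal x p w β γ ↔
      (β*w.2 + γ*w.1 = (β*w.1)*(lam+mu) ∧ γ*w.2 = (β*w.1)*(lam*mu)) := by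
    intro w β γ
    unfold IsFocal
    rw [show β • (w.1 • Du (Du x) p + w.2 • Du (Dv x) p) +
        γ • (w.1 • Du (Dv x) p + w.2 • Dv (Dv x) p)
        = (β*w.1) • Du (Du x) p + (β*w.2 + γ*w.1) • Du (Dv x) p + (γ*w.2) • Dv (Dv x) p by
      module]
    exact aux_L _ _ _ _ _ _ lam mu hI hconj _ _ _
  refine ⟨?_, ?_, aux_rank2 _ _ _ lam hindep, aux_rank2 _ _ _ mu hindep, ?_, ?_, ?_⟩
  · -- part (1)
    ext Q
    simp only [Set.mem_setOf_eq, Set.mem_union, SetLike.mem_coe, Submodule.mem_span_pair]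
    constructor
    · rintro ⟨α, β, γ, rfl, w, hw, hf⟩
      rw [key] at hf
      obtain ⟨h1, h2⟩ := hf
      have hd : w.1 * ((γ - β*lam)*(γ - β*mu)) = 0 := by
        linear_combination γ*h1 - β*h2
      rcases mul_eq_zero.1 hd with h0 | h0
      · -- w.1 = 0, so β = γ = 0
        have hw2 : w.2 ≠ 0 := by
          intro hz; exact hw (Prod.ext h0 hz)
        have hβ : β = 0 := by
          have := h1; rw [h0] at this; simp at this
          rcases this with h | h
          · exact h
          · exact absurd h hw2
        have hγ : γ = 0 := by
          have := h2; rw [h0] at this; simp at this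
          rcases this with h | h
          · exact h
          · exact absurd h hw2
        left
        exact ⟨α, 0, by rw [hβ, hγ]; module⟩
      · rcases mul_eq_zero.1 h0 with h0 | h0
        · left
          refine ⟨α, β, ?_⟩
          have hγ : γ = β * lam := by linear_combination h0
          rw [hγ]; module
        · right
          refine ⟨α, β, ?_⟩
          have hγ : γ = β * mu := by linear_combination h0
          rw [hγ]; module
    · rintro (⟨s, t, rfl⟩ | ⟨s, t, rfl⟩)
      · refine ⟨s, t, t*lam, by module, ((1:ℂ), mu), ?_, ?_⟩
        · intro hz
          have := congrArg Prod.fst hz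
          simp at this
        · rw [key]; constructor <;> ring_nf <;> ring
      · refine ⟨s, t, t*mu, by module, ((1:ℂ), lam), ?_, ?_⟩
        · intro hz
          have := congrArg Prod.fst hz
          simp at this
        · rw [key]; constructor <;> ring_nf <;> ring
  · -- distinctness
    intro h
    have hmem : Du x p + lam • Dv x p ∈ span ℂ ({x p, Du x p + mu • Dv x p} : Set (Fin 5 → ℂ)) := by
      rw [← h]; exact subset_span (by simp)
    rw [Submodule.mem_span_pair] at hmem
    obtain ⟨s, t, hst⟩ := hmem
    have h0 : ∑ i, (![s, t - 1, t*mu - lam] i) • (![x p, Du x p, Dv x p] i) = 0 := by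
      simp [Fin.sum_univ_three]
      linear_combination (norm := module) hst
    have h := Fintype.linearIndependent_iff.1 hindep _ h0
    have h1 := h 1
    have h2 := h 2
    simp at h1 h2
    apply hne
    have ht : t = 1 := by linear_combination h1
    rw [ht] at h2
    linear_combination -h2
  · -- part (2a) direction (1, lam)
    ext Q
    simp only [Set.mem_setOf_eq, SetLike.mem_coe, Submodule.mem_span_pair]
    constructor
    · rintro ⟨α, β, γ, rfl, hf⟩
      rw [key] at hf
      obtain ⟨h1, h2⟩ := hf
      simp only at h1 h2
      refine ⟨α, β, ?_⟩
      have hγ : γ = β * mu := by linear_combination h1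
      rw [hγ]; module
    · rintro ⟨s, t, rfl⟩
      refine ⟨s, t, t*mu, by module, ?_⟩
      rw [key]; constructor <;> ring_nf <;> ring
  · -- part (2b) direction (1, mu)
    ext Q
    simp only [Set.mem_setOf_eq, SetLike.mem_coe, Submodule.mem_span_pair]
    constructor
    · rintro ⟨α, β, γ, rfl, hf⟩
      rw [key] at hf
      obtain ⟨h1, h2⟩ := hf
      simp only at h1 h2
      refine ⟨α, β, ?_⟩
      have hγ : γ = β * lam := by linear_combination h1
      rw [hγ]; module
    · rintro ⟨s, t, rfl⟩
      refine ⟨s, t, t*lam, by module, ?_⟩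
      rw [key]; constructor <;> ring_nf <;> ring
  · -- part (3)
    intro w hw hwl hwm
    have hl : w.2 ≠ lam * w.1 := by
      intro hz
      exact hwl w.1 (Prod.ext (by simp) (by simp [hz, mul_comm]))
    have hm : w.2 ≠ mu * w.1 := by
      intro hz
      exact hwm w.1 (Prod.ext (by simp) (by simp [hz, mul_comm]))
    ext Q
    simp only [Set.mem_setOf_eq, SetLike.mem_coe, Submodule.mem_span_singleton]
    constructor
    · rintro ⟨α, β, γ, rfl, hf⟩
      rw [key] at hf
      obtain ⟨h1, h2⟩ := hf
      have hβ : β = 0 := by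
        have hd : β * ((w.2 - lam*w.1)*(w.2 - mu*w.1)) = 0 := by
          linear_combination w.2*h1 - w.1*h2
        rcases mul_eq_zero.1 hd with h | h
        · exact h
        · rcases mul_eq_zero.1 h with h | h
          · exact absurd (by linear_combination h) hl
          · exact absurd (by linear_combination h) hm
      have hγ : γ = 0 := by
        rw [hβ] at h1 h2
        simp at h1 h2
        rcases h1 with h | h
        · exact h
        · rcases h2 with h' | h'
          · exact h'
          · exact absurd (Prod.ext h h') hw
      exact ⟨α, by rw [hβ, hγ]; module⟩
    · rintro ⟨s, rfl⟩
      refine ⟨s, 0, 0, by module, ?_⟩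
      rw [key]; norm_num
end

section
/- Let Δ ⊆ ℂ² be open, x : Δ → ℂ⁵ holomorphic, and p ∈ Δ a point at which x(p), x_u(p), x_v(p) are linearly independent; set Π(p) = span_ℂ{x(p), x_u(p), x_v(p)}. Assume the six vectors x(p), x_u(p), x_v(p), x_uu(p), x_uv(p), x_vv(p) span ℂ⁵. Suppose there exists λ ∈ ℂ such that x_uu(p) + 2λ·x_uv(p) + λ²·x_vv(p) ∈ Π(p) (asymptotic condition at p). Then: (1) there is no pair λ' ≠ μ' in ℂ with x_uu(p) + (λ'+μ')·x_uv(p) + λ'μ'·x_vv(p) ∈ Π(p); (2) the set of points Q = α·x(p) + β·x_u(p) + γ·x_v(p) of Π(p) that are first-order focal for some nonzero direction equals the single 2-dimensional subspace span_ℂ{x(p), x_u(p)+λ·x_v(p)} (a single line of ℙ⁴, the focal conic being a double line); (3) the set of focal points for the direction (1, λ) is exactly span_ℂ{x(p), x_u(p)+λ·x_v(p)}, and for every nonzero direction not proportional to (1, λ) it is exactly span_ℂ{x(p)}. -/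
/-- Auxiliary: if five vectors of `ℂ⁵` are linearly independent, a combination of the
last two lies in the span of the first three only if it is trivial. -/
lemma aux_key {X U V B C : Fin 5 → ℂ}
    (hind : LinearIndependent ℂ ![X, U, V, B, C]) (b c : ℂ)
    (h : b • B + c • C ∈ Submodule.span ℂ ({X, U, V} : Set (Fin 5 → ℂ))) :
    b = 0 ∧ c = 0 := by
  rw [Submodule.mem_span_insert] at h
  obtain ⟨a, z, hz, hQ⟩ := h
  rw [Submodule.mem_span_insert] at hz
  obtain ⟨u, z', hz', hz2⟩ := hz
  rw [Submodule.mem_span_singleton] at hz'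
  obtain ⟨v, rfl⟩ := hz'
  subst hz2
  have hsum : ∑ i : Fin 5, (![a, u, v, -b, -c] : Fin 5 → ℂ) i • ![X, U, V, B, C] i = 0 := by
    rw [Fin.sum_univ_five]
    simp only [Matrix.cons_val_zero, Matrix.cons_val_one, Matrix.head_cons,
      Matrix.cons_val_two, Matrix.tail_cons, Matrix.cons_val_three, Matrix.cons_val_four]
    linear_combination (norm := module) -hQ
  have h4 := (Fintype.linearIndependent_iff.mp hind) _ hsum 3
  have h5 := (Fintype.linearIndependent_iff.mp hind) _ hsum 4
  simp only [Matrix.cons_val_three, Matrix.cons_val_four, Matrix.tail_cons,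
    Matrix.head_cons, Matrix.cons_val_zero, Matrix.cons_val_one, neg_eq_zero] at h4 h5
  exact ⟨h4, h5⟩

/-- γ₁-congruences: an asymptotic condition at `p` (with no conjugate double system)
makes the focal conic a double line through `x p`, with one double developable
direction, all other directions having `x p` as their only focal point. -/
theorem asymptotic_focal_double_line
    (Δ : Set (ℂ × ℂ)) (hΔ : IsOpen Δ)
    (x : ℂ × ℂ → (Fin 5 → ℂ)) (hx : DifferentiableOn ℂ x Δ)
    (p : ℂ × ℂ) (hp : p ∈ Δ)
    (hindep : LinearIndependent ℂ ![x p, Du x p, Dv x p])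
    (hspan : Submodule.span ℂ
      ({x p, Du x p, Dv x p, Du (Du x) p, Du (Dv x) p, Dv (Dv x) p} : Set (Fin 5 → ℂ)) = ⊤)
    (lam : ℂ)
    (hasym : Du (Du x) p + (2 * lam) • Du (Dv x) p + (lam ^ 2) • Dv (Dv x) p
      ∈ Submodule.span ℂ ({x p, Du x p, Dv x p} : Set (Fin 5 → ℂ))) :
    -- (1) no conjugate double system condition holds at p
    (¬ ∃ lam' mu' : ℂ, lam' ≠ mu' ∧
        Du (Du x) p + (lam' + mu') • Du (Dv x) p + (lam' * mu') • Dv (Dv x) p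
          ∈ Submodule.span ℂ ({x p, Du x p, Dv x p} : Set (Fin 5 → ℂ))) ∧
    -- (2) the focal locus is a single line through x p (a double line)
    ({Q : Fin 5 → ℂ | ∃ α β γ : ℂ,
        Q = α • x p + β • Du x p + γ • Dv x p ∧
        ∃ w : ℂ × ℂ, w ≠ 0 ∧ IsFocal x p w β γ}
      = (Submodule.span ℂ ({x p, Du x p + lam • Dv x p} : Set (Fin 5 → ℂ)) :
          Set (Fin 5 → ℂ))) ∧
    Module.finrank ℂ
      (Submodule.span ℂ ({x p, Du x p + lam • Dv x p} : Set (Fin 5 → ℂ))) = 2 ∧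
    -- (3) the focal points for the direction (1, lam) and for all other directions
    ({Q : Fin 5 → ℂ | ∃ α β γ : ℂ,
        Q = α • x p + β • Du x p + γ • Dv x p ∧ IsFocal x p ((1 : ℂ), lam) β γ}
      = (Submodule.span ℂ ({x p, Du x p + lam • Dv x p} : Set (Fin 5 → ℂ)) :
          Set (Fin 5 → ℂ))) ∧
    ∀ w : ℂ × ℂ, w ≠ 0 → (∀ c : ℂ, w ≠ c • ((1 : ℂ), lam)) →
      {Q : Fin 5 → ℂ | ∃ α β γ : ℂ,
          Q = α • x p + β • Du x p + γ • Dv x p ∧ IsFocal x p w β γ}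
        = (Submodule.span ℂ ({x p} : Set (Fin 5 → ℂ)) : Set (Fin 5 → ℂ)) := by
  set X := x p with hX
  set U := Du x p with hU
  set V := Dv x p with hV
  set A := Du (Du x) p with hA
  set B := Du (Dv x) p with hB
  set C := Dv (Dv x) p with hC
  set Pi := Submodule.span ℂ ({X, U, V} : Set (Fin 5 → ℂ)) with hPi
  -- span of the five vectors X U V B C is everything
  have hrange : Set.range ![X, U, V, B, C] = ({X, U, V, B, C} : Set (Fin 5 → ℂ)) := by
    simp [Matrix.range_cons, Matrix.range_empty]
    ext y; simp; tauto
  have hsub : Pi ≤ Submodule.span ℂ ({X, U, V, B, C} : Set (Fin 5 → ℂ)) := by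
    apply Submodule.span_mono
    intro y hy
    simp only [Set.mem_insert_iff, Set.mem_singleton_iff] at hy ⊢
    tauto
  have hspan5 : Submodule.span ℂ ({X, U, V, B, C} : Set (Fin 5 → ℂ)) = ⊤ := by
    rw [eq_top_iff, ← hspan]
    rw [Submodule.span_le]
    intro y hy
    simp only [Set.mem_insert_iff, Set.mem_singleton_iff] at hy
    rcases hy with rfl | rfl | rfl | rfl | rfl | rfl
    · exact Submodule.subset_span (by simp)
    · exact Submodule.subset_span (by simp)
    · exact Submodule.subset_span (by simp)
    · -- A  = (A + 2λB + λ²C) - 2λ B - λ² C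
      have h1 : A = (A + (2*lam) • B + (lam^2) • C) + (-(2*lam)) • B + (-(lam^2)) • C := by
        module
      rw [h1]
      refine Submodule.add_mem _ (Submodule.add_mem _ (hsub hasym) ?_) ?_
      · exact Submodule.smul_mem _ _ (Submodule.subset_span (by simp))
      · exact Submodule.smul_mem _ _ (Submodule.subset_span (by simp))
    · exact Submodule.subset_span (by simp)
    · exact Submodule.subset_span (by simp)
  have hind5 : LinearIndependent ℂ ![X, U, V, B, C] := by
    apply linearIndependent_of_top_le_span_of_card_eq_finrank
    · rw [hrange, hspan5]
    · simp
  -- key membership criterion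
  have key : ∀ b c : ℂ, (b • B + c • C ∈ Pi ↔ b = 0 ∧ c = 0) := by
    intro b c
    constructor
    · exact aux_key hind5 b c
    · rintro ⟨rfl, rfl⟩; simp [Submodule.zero_mem]
  -- focal characterization
  have focal_iff : ∀ (w : ℂ × ℂ) (β γ : ℂ), IsFocal x p w β γ ↔
      (β * w.2 - 2 * lam * β * w.1 + γ * w.1 = 0 ∧ γ * w.2 - lam ^ 2 * β * w.1 = 0) := by
    intro w β γ
    unfold IsFocal
    have hsplit : β • (w.1 • A + w.2 • B) + γ • (w.1 • B + w.2 • C)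
        = (β * w.1) • (A + (2*lam) • B + (lam^2) • C)
          + ((β * w.2 - 2 * lam * β * w.1 + γ * w.1) • B
            + (γ * w.2 - lam ^ 2 * β * w.1) • C) := by
      module
    rw [← hX, ← hU, ← hV, ← hA, ← hB, ← hC, ← hPi, hsplit,
      Submodule.add_mem_iff_right _ (Submodule.smul_mem _ _ hasym)]
    exact key _ _
  refine ⟨?_, ?_, ?_, ?_, ?_⟩
  · -- (1)
    rintro ⟨l, m, hne, hmem⟩
    have hmem' : ((l + m) - 2*lam) • B + (l*m - lam^2) • C ∈ Pi := by
      have heq : ((l + m) - 2*lam) • B + (l*m - lam^2) • C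
          = (A + (l+m) • B + (l*m) • C) - (A + (2*lam) • B + (lam^2) • C) := by module
      rw [heq]
      exact Submodule.sub_mem _ hmem hasym
    obtain ⟨h1, h2⟩ := (key _ _).mp hmem'
    apply hne
    have hsq : (l - m)^2 = 0 := by linear_combination (l + m + 2*lam) * h1 - 4 * h2
    exact sub_eq_zero.mp (pow_eq_zero_iff (n := 2) (by norm_num) |>.mp hsq)
  · -- (2)
    ext Q
    simp only [Set.mem_setOf_eq, SetLike.mem_coe, Submodule.mem_span_pair]
    constructor
    · rintro ⟨α, β, γ, rfl, w, hw, hf⟩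
      rw [focal_iff] at hf
      obtain ⟨h1, h2⟩ := hf
      by_cases hcase : w.2 = lam * w.1
      · have hw1 : w.1 ≠ 0 := by
          intro h0
          apply hw
          have : w.2 = 0 := by rw [hcase, h0, mul_zero]
          exact Prod.ext h0 this
        have hg : γ = lam * β := by
          have hx1 : w.1 * (γ - lam * β) = 0 := by
            rw [hcase] at h1; linear_combination h1
          rcases mul_eq_zero.mp hx1 with h | h
          · exact absurd h hw1
          · linear_combination h
        subst hg
        exact ⟨α, β, by module⟩
      · have hb : β = 0 := by
          have hb2 : β * (w.2 - lam * w.1)^2 = 0 := by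
            linear_combination w.2 * h1 - w.1 * h2
          rcases mul_eq_zero.mp hb2 with h | h
          · exact h
          · exact absurd (sub_eq_zero.mp (pow_eq_zero_iff (n := 2) (by norm_num) |>.mp h))
              hcase
        subst hb
        have hg : γ = 0 := by
          by_contra hg0
          apply hw
          have hw1 : w.1 = 0 := by
            rcases mul_eq_zero.mp (by linear_combination h1 : γ * w.1 = 0) with h | h
            · exact absurd h hg0
            · exact h
          have hw2 : w.2 = 0 := by
            rcases mul_eq_zero.mp (by linear_combination h2 : γ * w.2 = 0) with h | h
            · exact absurd h hg0
            · exact h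
          exact Prod.ext hw1 hw2
        subst hg
        exact ⟨α, 0, by module⟩
    · rintro ⟨m, n, rfl⟩
      refine ⟨m, n, lam * n, by module, ((1 : ℂ), lam), ?_, ?_⟩
      · intro h
        have := congrArg Prod.fst h
        simp at this
      · rw [focal_iff]
        constructor <;> ring_nf <;> simp <;> ring
  · -- finrank = 2
    have hpair : LinearIndependent ℂ ![X, U + lam • V] := by
      rw [LinearIndependent.pair_iff]
      intro s t hst
      have hsum : ∑ i : Fin 3, (![s, t, t * lam] : Fin 3 → ℂ) i • ![X, U, V] i = 0 := by
        rw [Fin.sum_univ_three]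
        simp only [Matrix.cons_val_zero, Matrix.cons_val_one, Matrix.head_cons,
          Matrix.cons_val_two, Matrix.tail_cons]
        linear_combination (norm := module) hst
      have h0 := (Fintype.linearIndependent_iff.mp hindep) _ hsum 0
      have h1 := (Fintype.linearIndependent_iff.mp hindep) _ hsum 1
      simp only [Matrix.cons_val_zero, Matrix.cons_val_one, Matrix.head_cons] at h0 h1
      exact ⟨h0, h1⟩
    have hr2 : ({X, U + lam • V} : Set (Fin 5 → ℂ)) = Set.range ![X, U + lam • V] := by
      simp [Matrix.range_cons, Matrix.range_empty]
      ext y; simp; tauto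
    rw [hr2]
    simpa using finrank_span_eq_card hpair
  · -- (3a)
    ext Q
    simp only [Set.mem_setOf_eq, SetLike.mem_coe, Submodule.mem_span_pair]
    constructor
    · rintro ⟨α, β, γ, rfl, hf⟩
      rw [focal_iff] at hf
      obtain ⟨h1, h2⟩ := hf
      simp only at h1 h2
      have hg : γ = lam * β := by linear_combination h1
      subst hg
      exact ⟨α, β, by module⟩
    · rintro ⟨m, n, rfl⟩
      refine ⟨m, n, lam * n, by module, ?_⟩
      rw [focal_iff]
      constructor <;> simp <;> ring
  · -- (3b)
    intro w hw hnp
    have hcase : w.2 ≠ lam * w.1 := by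
      intro h
      apply hnp w.1
      have hsm : w.1 • ((1 : ℂ), lam) = (w.1 * 1, w.1 * lam) := rfl
      rw [hsm]
      exact Prod.ext (by simp) (by rw [h, mul_comm])
    ext Q
    simp only [Set.mem_setOf_eq, SetLike.mem_coe, Submodule.mem_span_singleton]
    constructor
    · rintro ⟨α, β, γ, rfl, hf⟩
      rw [focal_iff] at hf
      obtain ⟨h1, h2⟩ := hf
      have hb : β = 0 := by
        have hb2 : β * (w.2 - lam * w.1)^2 = 0 := by
          linear_combination w.2 * h1 - w.1 * h2
        rcases mul_eq_zero.mp hb2 with h | h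
        · exact h
        · exact absurd (sub_eq_zero.mp (pow_eq_zero_iff (n := 2) (by norm_num) |>.mp h)) hcase
      subst hb
      have hg : γ = 0 := by
        by_contra hg0
        apply hw
        have hw1 : w.1 = 0 := by
          rcases mul_eq_zero.mp (by linear_combination h1 : γ * w.1 = 0) with h | h
          · exact absurd h hg0
          · exact h
        have hw2 : w.2 = 0 := by
          rcases mul_eq_zero.mp (by linear_combination h2 : γ * w.2 = 0) with h | h
          · exact absurd h hg0
          · exact h
        exact Prod.ext hw1 hw2
      subst hg
      exact ⟨α, by module⟩
    · rintro ⟨a, rfl⟩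
      refine ⟨a, 0, 0, by module, ?_⟩
      rw [focal_iff]
      constructor <;> ring
end

section
/- Let W ⊂ ℂ⁵ be a 4-dimensional linear subspace and v ∈ ℂ⁵ ∖ W. Let Δ ⊆ ℂ² be open and y, z : Δ → W holomorphic maps such that v, y(p), z(p) are linearly independent for every p ∈ Δ. Fix p ∈ Δ, a direction w ∈ ℂ² ∖ {(0,0)}, and holomorphic functions a, b : Δ → ℂ with (a(p), b(p)) ≠ (0,0), and set Q = a·y + b·z (so Q(p) is a point of the line span_ℂ{y(p), z(p)}). Then the following are equivalent: (i) the directional derivative D_w Q(p) lies in span_ℂ{y(p), z(p)}; (ii) D_w Q(p) lies in span_ℂ{v, y(p), z(p)}; (iii) for all holomorphic α, β : Δ → ℂ, the directional derivative D_w(α·v + β·Q)(p) lies in span_ℂ{v, y(p), z(p)}. That is, Q(p) is a first-order focal point of the line congruence span{y, z} in the hyperplane W for the direction w if and only if every point of the line of ℙ⁴ joining v and Q(p) is a first-order focal point of the cone congruence of planes span{v, y, z} for the direction w. -/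
/-- If a differentiable map sends an open neighborhood into a submodule of a
finite-dimensional space, then its derivative lies in that submodule. -/
lemma fderiv_mem_of_maps_into {E : Type*} [NormedAddCommGroup E] [NormedSpace ℂ E]
    [FiniteDimensional ℂ E]
    (S : Submodule ℂ E) (f : (ℂ × ℂ) → E) (s : Set (ℂ × ℂ)) (hs : IsOpen s)
    (p : ℂ × ℂ) (hp : p ∈ s) (hf : DifferentiableAt ℂ f p)
    (hmem : ∀ q ∈ s, f q ∈ S) (w : ℂ × ℂ) :
    fderiv ℂ f p w ∈ S := by
  haveI : IsClosed (S : Set E) := S.closed_of_finiteDimensional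
  let π : E →L[ℂ] (E ⧸ S) := LinearMap.toContinuousLinearMap S.mkQ
  have h1 : HasFDerivAt (fun q => π (f q)) (π.comp (fderiv ℂ f p)) p :=
    π.hasFDerivAt.comp p hf.hasFDerivAt
  have h2 : (fun q => π (f q)) =ᶠ[nhds p] (fun _ => (0 : E ⧸ S)) := by
    filter_upwards [hs.mem_nhds hp] with q hq
    simpa [π, Submodule.Quotient.mk_eq_zero] using hmem q hq
  have h3 : fderiv ℂ (fun q => π (f q)) p = 0 := by
    rw [h2.fderiv_eq]
    exact fderiv_const_apply 0
  have h4 : π (fderiv ℂ f p w) = 0 := by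
    have := h1.fderiv
    rw [h3] at this
    have := congrArg (fun L => L w) this.symm
    simpa using this
  simpa [π, Submodule.Quotient.mk_eq_zero] using h4

/-- β₃/γ₃-congruences are cones over line congruences in a hyperplane:
a point `Q p = a p • y p + b p • z p` of the moving line `span {y p, z p}` in the
hyperplane `W` is a first-order focal point of the line congruence for the direction
`w` if and only if every point of the line of ℙ⁴ joining the vertex `v` and `Q p`
is a first-order focal point of the congruence of planes `span {v, y, z}` for `w`. -/
theorem cone_congruence_focal_points
    (W : Submodule ℂ (Fin 5 → ℂ)) (hW : Module.finrank ℂ W = 4)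
    (v : Fin 5 → ℂ) (hv : v ∉ W)
    (Δ : Set (ℂ × ℂ)) (hΔ : IsOpen Δ)
    (y z : ℂ × ℂ → (Fin 5 → ℂ))
    (hy : DifferentiableOn ℂ y Δ) (hz : DifferentiableOn ℂ z Δ)
    (hyW : ∀ q ∈ Δ, y q ∈ W) (hzW : ∀ q ∈ Δ, z q ∈ W)
    (hindep : ∀ q ∈ Δ, LinearIndependent ℂ ![v, y q, z q])
    (p : ℂ × ℂ) (hp : p ∈ Δ)
    (w : ℂ × ℂ) (hw : w ≠ 0)
    (a b : ℂ × ℂ → ℂ) (ha : DifferentiableOn ℂ a Δ) (hb : DifferentiableOn ℂ b Δ)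
    (hab : (a p, b p) ≠ ((0 : ℂ), (0 : ℂ))) :
    -- (i) ↔ (ii)
    ((fderiv ℂ (fun q => a q • y q + b q • z q) p w
        ∈ Submodule.span ℂ ({y p, z p} : Set (Fin 5 → ℂ))) ↔
      (fderiv ℂ (fun q => a q • y q + b q • z q) p w
        ∈ Submodule.span ℂ ({v, y p, z p} : Set (Fin 5 → ℂ)))) ∧
    -- (i) ↔ (iii)
    ((fderiv ℂ (fun q => a q • y q + b q • z q) p w
        ∈ Submodule.span ℂ ({y p, z p} : Set (Fin 5 → ℂ))) ↔
      (∀ α β : ℂ × ℂ → ℂ, DifferentiableOn ℂ α Δ → DifferentiableOn ℂ β Δ →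
        fderiv ℂ (fun q => α q • v + β q • (a q • y q + b q • z q)) p w
          ∈ Submodule.span ℂ ({v, y p, z p} : Set (Fin 5 → ℂ)))) := by
  have hnb : Δ ∈ nhds p := hΔ.mem_nhds hp
  set Q : ℂ × ℂ → (Fin 5 → ℂ) := fun q => a q • y q + b q • z q with hQdef
  have hya : DifferentiableAt ℂ y p := hy.differentiableAt hnb
  have hza : DifferentiableAt ℂ z p := hz.differentiableAt hnb
  have haa : DifferentiableAt ℂ a p := ha.differentiableAt hnb
  have hba : DifferentiableAt ℂ b p := hb.differentiableAt hnb
  have hQa : DifferentiableAt ℂ Q p := (haa.smul hya).add (hba.smul hza)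
  have hspan_le : Submodule.span ℂ ({y p, z p} : Set (Fin 5 → ℂ)) ≤
      Submodule.span ℂ ({v, y p, z p} : Set (Fin 5 → ℂ)) := by
    apply Submodule.span_mono
    intro x hx
    rcases hx with h | h
    · exact Or.inr (Or.inl h)
    · exact Or.inr (Or.inr h)
  have hyzW : Submodule.span ℂ ({y p, z p} : Set (Fin 5 → ℂ)) ≤ W := by
    rw [Submodule.span_le]
    rintro x (rfl | rfl)
    · exact hyW p hp
    · exact hzW p hp
  have hQW : ∀ q ∈ Δ, Q q ∈ W := fun q hq =>
    W.add_mem (W.smul_mem _ (hyW q hq)) (W.smul_mem _ (hzW q hq))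
  have hDW : fderiv ℂ Q p w ∈ W :=
    fderiv_mem_of_maps_into W Q Δ hΔ p hp hQa hQW w
  -- (ii) → (i)
  have h21 : fderiv ℂ Q p w ∈ Submodule.span ℂ ({v, y p, z p} : Set (Fin 5 → ℂ)) →
      fderiv ℂ Q p w ∈ Submodule.span ℂ ({y p, z p} : Set (Fin 5 → ℂ)) := by
    intro h
    rw [show ({v, y p, z p} : Set (Fin 5 → ℂ)) = insert v {y p, z p} from rfl,
      Submodule.mem_span_insert] at h
    obtain ⟨c, u, hu, hrep⟩ := h
    have hcv : c • v ∈ W := by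
      have : c • v = fderiv ℂ Q p w - u := by rw [hrep]; abel
      rw [this]
      exact W.sub_mem hDW (hyzW hu)
    have hc : c = 0 := by
      by_contra hc
      exact hv (by simpa [smul_smul, inv_mul_cancel₀ hc] using W.smul_mem c⁻¹ hcv)
    rw [hrep, hc, zero_smul, zero_add]
    exact hu
  have hiff : (fderiv ℂ Q p w ∈ Submodule.span ℂ ({y p, z p} : Set (Fin 5 → ℂ))) ↔
      (fderiv ℂ Q p w ∈ Submodule.span ℂ ({v, y p, z p} : Set (Fin 5 → ℂ))) :=
    ⟨fun h => hspan_le h, h21⟩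
  refine ⟨hiff, ?_⟩
  constructor
  · -- (i) → (iii)
    intro hD α β hα hβ
    have hαa : DifferentiableAt ℂ α p := hα.differentiableAt hnb
    have hβa : DifferentiableAt ℂ β p := hβ.differentiableAt hnb
    have hvmem : v ∈ Submodule.span ℂ ({v, y p, z p} : Set (Fin 5 → ℂ)) :=
      Submodule.subset_span (Or.inl rfl)
    have hymem : y p ∈ Submodule.span ℂ ({v, y p, z p} : Set (Fin 5 → ℂ)) :=
      Submodule.subset_span (Or.inr (Or.inl rfl))
    have hzmem : z p ∈ Submodule.span ℂ ({v, y p, z p} : Set (Fin 5 → ℂ)) :=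
      Submodule.subset_span (Or.inr (Or.inr rfl))
    have heq : fderiv ℂ (fun q => α q • v + β q • Q q) p =
        (fderiv ℂ α p).smulRight v +
          (β p • fderiv ℂ Q p + (fderiv ℂ β p).smulRight (Q p)) := by
      rw [fderiv_fun_add (by exact hαa.smul_const v) (by exact hβa.smul hQa)]
      rw [fderiv_smul_const hαa v, fderiv_fun_smul hβa hQa]
    have : fderiv ℂ (fun q => α q • v + β q • Q q) p w =
        (fderiv ℂ α p w) • v + (β p • fderiv ℂ Q p w + (fderiv ℂ β p w) • Q p) := by
      rw [heq]; simp
    rw [this]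
    refine Submodule.add_mem _ (Submodule.smul_mem _ _ hvmem) (Submodule.add_mem _
      (Submodule.smul_mem _ _ (hspan_le hD)) (Submodule.smul_mem _ _ ?_))
    exact Submodule.add_mem _ (Submodule.smul_mem _ _ hymem) (Submodule.smul_mem _ _ hzmem)
  · -- (iii) → (i)
    intro h
    have h0 := h (fun _ => 0) (fun _ => 1) (differentiableOn_const 0)
      (differentiableOn_const 1)
    have hfun : (fun q => (0 : ℂ) • v + (1 : ℂ) • Q q) = Q := by
      funext q; simp
    rw [hfun] at h0
    exact h21 h0
end

section
/- Let Δ ⊆ ℂ² be open, x : Δ → ℂ⁵ holomorphic, and p ∈ Δ a point at which x(p), x_u(p), x_v(p), x_uu(p) are linearly independent and x_uv(p) ∈ span_ℂ{x(p), x_u(p), x_v(p)}; write x_uv(p) = c₀·x(p) + c₁·x_u(p) + γ·x_v(p), and set L(p) = span_ℂ{x(p), x_u(p)}. Call a point Q = a·x(p) + b·x_u(p) of L(p) focal for the direction (w₁, w₂) ∈ ℂ² ∖ {(0,0)} if a·(w₁·x_u + w₂·x_v)(p) + b·(w₁·x_uu + w₂·x_uv)(p) ∈ L(p). Then a nonzero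 point Q = a·x(p) + b·x_u(p) is focal for some nonzero direction if and only if b = 0 or a + b·γ = 0; the point x(p) (case b = 0) is focal exactly for the directions proportional to (1, 0), and the point x_u(p) − γ·x(p) (case a + bγ = 0) is focal exactly for the directions proportional to (0, 1). In particular the line family L has exactly two distinct focal points on L(p). -/
/-- From the proof of Theorem 2.3.2: for a conjugate parametrization, each tangent
line `L(p) = span {x p, x_u p}` of the family carries exactly two distinct focal
points: the point of tangency `x p` (focal exactly for the directions proportional
to `(1,0)`) and the vertex point `x_u p − γ • x p` (focal exactly for the
directions proportional to `(0,1)`). -/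
theorem conjugate_tangent_lines_two_focal_points
    (Δ : Set (ℂ × ℂ)) (hΔ : IsOpen Δ)
    (x : ℂ × ℂ → (Fin 5 → ℂ)) (hx : DifferentiableOn ℂ x Δ)
    (p : ℂ × ℂ) (hp : p ∈ Δ)
    (hindep : LinearIndependent ℂ ![x p, Du x p, Dv x p, Du (Du x) p])
    (c₀ c₁ γ : ℂ)
    (huv : Du (Dv x) p = c₀ • x p + c₁ • Du x p + γ • Dv x p) :
    -- a nonzero point a • x p + b • x_u p is focal for some nonzero direction
    -- iff b = 0 or a + b * γ = 0
    (∀ a b : ℂ, (a, b) ≠ ((0 : ℂ), (0 : ℂ)) →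
      ((∃ w : ℂ × ℂ, w ≠ 0 ∧
          a • (w.1 • Du x p + w.2 • Dv x p) +
            b • (w.1 • Du (Du x) p + w.2 • Du (Dv x) p)
            ∈ Submodule.span ℂ ({x p, Du x p} : Set (Fin 5 → ℂ))) ↔
        (b = 0 ∨ a + b * γ = 0))) ∧
    -- x p is focal exactly for the directions proportional to (1, 0)
    (∀ w : ℂ × ℂ, w ≠ 0 →
      (((1 : ℂ) • (w.1 • Du x p + w.2 • Dv x p) +
          (0 : ℂ) • (w.1 • Du (Du x) p + w.2 • Du (Dv x) p)
          ∈ Submodule.span ℂ ({x p, Du x p} : Set (Fin 5 → ℂ))) ↔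
        ∃ c : ℂ, w = c • ((1 : ℂ), (0 : ℂ)))) ∧
    -- x_u p − γ • x p is focal exactly for the directions proportional to (0, 1)
    (∀ w : ℂ × ℂ, w ≠ 0 →
      (((-γ) • (w.1 • Du x p + w.2 • Dv x p) +
          (1 : ℂ) • (w.1 • Du (Du x) p + w.2 • Du (Dv x) p)
          ∈ Submodule.span ℂ ({x p, Du x p} : Set (Fin 5 → ℂ))) ↔
        ∃ c : ℂ, w = c • ((0 : ℂ), (1 : ℂ)))) ∧
    -- the two focal points are distinct points of ℙ⁴
    LinearIndependent ℂ ![x p, Du x p - γ • x p] := by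
  classical
  set e0 := x p with he0
  set e1 := Du x p with he1
  set e2 := Dv x p with he2
  set e3 := Du (Du x) p with he3
  have hli := Fintype.linearIndependent_iff.mp hindep
  have key : ∀ α β μ ν : ℂ, (α • e0 + β • e1 + μ • e2 + ν • e3 ∈
      Submodule.span ℂ ({e0, e1} : Set (Fin 5 → ℂ))) ↔ (μ = 0 ∧ ν = 0) := by
    intro α β μ ν
    constructor
    · intro h
      rw [Submodule.mem_span_pair] at h
      obtain ⟨s, t, hst⟩ := h
      have hz : ∑ i, (![α - s, β - t, μ, ν] i) • (![e0, e1, e2, e3] i) = 0 := by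
        simp only [Fin.sum_univ_four, Matrix.cons_val_zero, Matrix.cons_val_one,
          Matrix.head_cons, Matrix.cons_val_two, Matrix.tail_cons, Matrix.cons_val_three]
        linear_combination (norm := module) -hst
      have h2 := hli ![α - s, β - t, μ, ν] hz 2
      have h3 := hli ![α - s, β - t, μ, ν] hz 3
      simp at h2 h3
      exact ⟨h2, h3⟩
    · rintro ⟨hμ, hν⟩
      subst hμ; subst hν
      rw [Submodule.mem_span_pair]
      exact ⟨α, β, by module⟩
  have keygen : ∀ a b : ℂ, ∀ w : ℂ × ℂ,
      (a • (w.1 • e1 + w.2 • e2) + b • (w.1 • e3 + w.2 • Du (Dv x) p) ∈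
        Submodule.span ℂ ({e0, e1} : Set (Fin 5 → ℂ))) ↔
      (w.2 * (a + b * γ) = 0 ∧ b * w.1 = 0) := by
    intro a b w
    have hrw : a • (w.1 • e1 + w.2 • e2) + b • (w.1 • e3 + w.2 • Du (Dv x) p) =
        (b * w.2 * c₀) • e0 + (a * w.1 + b * w.2 * c₁) • e1 +
          (w.2 * (a + b * γ)) • e2 + (b * w.1) • e3 := by
      rw [huv]; module
    rw [hrw, key]
  refine ⟨?_, ?_, ?_, ?_⟩
  · intro a b hab
    constructor
    · rintro ⟨w, hw, hmem⟩
      rw [keygen] at hmem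
      obtain ⟨h1, h2⟩ := hmem
      by_cases hw1 : w.1 = 0
      · have hw2 : w.2 ≠ 0 := by
          intro hw2; exact hw (Prod.ext hw1 hw2)
        right
        have := mul_eq_zero.mp h1
        tauto
      · left
        rcases mul_eq_zero.mp h2 with h | h
        · exact h
        · exact absurd h hw1
    · rintro (hb | ha)
      · exact ⟨(1, 0), by simp, by rw [keygen]; simp [hb]⟩
      · exact ⟨(0, 1), by simp [Prod.ext_iff], by rw [keygen]; simp [ha]⟩
  · intro w hw
    rw [keygen 1 0 w]
    constructor
    · rintro ⟨h1, -⟩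
      have hw2 : w.2 = 0 := by
        rcases mul_eq_zero.mp h1 with h | h
        · exact h
        · simpa using h
      exact ⟨w.1, Prod.ext (by simp) (by simp [hw2])⟩
    · rintro ⟨c, rfl⟩
      simp
  · intro w hw
    rw [keygen (-γ) 1 w]
    constructor
    · rintro ⟨-, h2⟩
      have hw1 : w.1 = 0 := by simpa using h2
      exact ⟨w.2, Prod.ext (by simp [hw1]) (by simp)⟩
    · rintro ⟨c, rfl⟩
      constructor
      · ring_nf
      · simp
  · rw [Fintype.linearIndependent_iff]
    intro g hg
    have hz : ∑ i, (![g 0 - g 1 * γ, g 1, 0, 0] i) • (![e0, e1, e2, e3] i) = 0 := by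
      simp only [Fin.sum_univ_four, Matrix.cons_val_zero, Matrix.cons_val_one,
        Matrix.head_cons, Matrix.cons_val_two, Matrix.tail_cons, Matrix.cons_val_three]
      rw [Fin.sum_univ_two] at hg
      simp only [Matrix.cons_val_zero, Matrix.cons_val_one, Matrix.head_cons] at hg
      linear_combination (norm := module) hg
    have h0 := hli _ hz 0
    have h1 := hli _ hz 1
    simp at h0 h1
    intro i
    fin_cases i
    · simp [h1] at h0; simpa using h0
    · simpa using h1
end

section
/- Let Δ ⊆ ℂ be a nonempty connected open set, n ≥ 1, 1 ≤ k ≤ n, and let v₁, …, v_k : Δ → ℂⁿ be holomorphic maps such that v₁(u), …, v_k(u) are linearly independent for every u ∈ Δ and such that, for every i and every u ∈ Δ, the derivative vᵢ'(u) lies in span_ℂ{v₁(u), …, v_k(u)}. Then there is a fixed k-dimensional subspace S ⊆ ℂⁿ with span_ℂ{v₁(u), …, v_k(u)} = S for all u ∈ Δ. -/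
open Matrix in
lemma differentiableAt_det_comp {k : ℕ} (A : ℂ → Matrix (Fin k) (Fin k) ℂ) {u : ℂ}
    (h : ∀ i j, DifferentiableAt ℂ (fun x => A x i j) u) :
    DifferentiableAt ℂ (fun x => (A x).det) u := by
  simp only [Matrix.det_apply, Units.smul_def, zsmul_eq_mul]
  exact DifferentiableAt.fun_sum fun σ _ =>
    (DifferentiableAt.fun_finsetProd fun i _ => h (σ i) i).const_mul _

lemma exists_dual_family {n k : ℕ} (b : Fin k → (Fin n → ℂ))
    (hb : LinearIndependent ℂ b) :
    ∃ φ : Fin k → ((Fin n → ℂ) →ₗ[ℂ] ℂ), ∀ i j, φ j (b i) = if j = i then 1 else 0 := by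
  let L : (Fin k → ℂ) →ₗ[ℂ] (Fin n → ℂ) :=
    { toFun := fun c => ∑ i, c i • b i
      map_add' := by
        intro x y
        simp [add_smul, Finset.sum_add_distrib]
      map_smul' := by
        intro m x
        simp [smul_smul, Finset.smul_sum] }
  have hker : LinearMap.ker L = ⊥ := by
    rw [LinearMap.ker_eq_bot']
    intro c hc
    funext i
    exact Fintype.linearIndependent_iff.mp hb c hc i
  obtain ⟨g, hg⟩ := L.exists_leftInverse_of_injective hker
  refine ⟨fun j => (LinearMap.proj j).comp g, ?_⟩
  intro i j
  have h1 : L (Pi.single i 1) = b i := by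
    simp only [L, LinearMap.coe_mk, AddHom.coe_mk, Pi.single_apply, ite_smul, one_smul, zero_smul]
    simp
  have h2 : g (b i) = Pi.single i 1 := by
    rw [← h1]
    exact congrArg (fun m => m (Pi.single i 1)) (congrArg DFunLike.coe hg)
  simp [h2, Pi.single_apply]

open Metric in
/-- Local constancy of the moving span: around each point of `Δ` there is a ball on which
the span of the frame `v` is constant. -/
lemma focal_key
    (Δ : Set ℂ) (hopen : IsOpen Δ)
    (n k : ℕ)
    (v : Fin k → ℂ → (Fin n → ℂ))
    (hdiff : ∀ i, DifferentiableOn ℂ (v i) Δ)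
    (hindep : ∀ u ∈ Δ, LinearIndependent ℂ (fun i => v i u))
    (hfocal : ∀ i, ∀ u ∈ Δ,
      deriv (v i) u ∈ Submodule.span ℂ (Set.range (fun j => v j u)))
    {u₀ : ℂ} (hu₀ : u₀ ∈ Δ) :
    ∃ ε > 0, ball u₀ ε ⊆ Δ ∧ ∀ u ∈ ball u₀ ε,
      Submodule.span ℂ (Set.range fun j => v j u)
        = Submodule.span ℂ (Set.range fun j => v j u₀) := by
  obtain ⟨φ, hφ⟩ := exists_dual_family (fun i => v i u₀) (hindep u₀ hu₀)
  let φC : Fin k → ((Fin n → ℂ) →L[ℂ] ℂ) := fun j => LinearMap.toContinuousLinearMap (φ j)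
  set M : ℂ → Matrix (Fin k) (Fin k) ℂ := fun u => Matrix.of fun i j => φ i (v j u) with hMdef
  have hM : ∀ x i j, M x i j = φ i (v j x) := fun x i j => rfl
  have hvdiff : ∀ j, ∀ u ∈ Δ, DifferentiableAt ℂ (v j) u := fun j u hu =>
    (hdiff j).differentiableAt (hopen.mem_nhds hu)
  have hMdiff : ∀ i j, ∀ u ∈ Δ, DifferentiableAt ℂ (fun x => M x i j) u := by
    intro i j u hu
    exact ((φC i).differentiableAt).comp u (hvdiff j u hu)
  have hM0 : M u₀ = 1 := by
    ext i j
    simp only [hMdef, Matrix.of_apply, Matrix.one_apply]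
    exact hφ j i
  have hdet0 : (M u₀).det = 1 := by rw [hM0, Matrix.det_one]
  have hmem : {x | (M x).det ≠ 0} ∩ Δ ∈ nhds u₀ := by
    refine Filter.inter_mem ?_ (hopen.mem_nhds hu₀)
    have hc : ContinuousAt (fun x => (M x).det) u₀ :=
      (differentiableAt_det_comp M (fun i j => hMdiff i j u₀ hu₀)).continuousAt
    exact hc.eventually_ne (by rw [hdet0]; exact one_ne_zero)
  obtain ⟨ε, hε, hball⟩ := Metric.mem_nhds_iff.mp hmem
  refine ⟨ε, hε, fun x hx => (hball hx).2, ?_⟩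
  set B := ball u₀ ε with hBdef
  have hBopen : IsOpen B := isOpen_ball
  have hBΔ : B ⊆ Δ := fun x hx => (hball hx).2
  have hBdet : ∀ u ∈ B, (M u).det ≠ 0 := fun u hu => (hball hu).1
  have hu₀B : u₀ ∈ B := mem_ball_self hε
  set N : ℂ → Matrix (Fin k) (Fin k) ℂ := fun u => (M u)⁻¹ with hNdef
  have hMN : ∀ u ∈ B, M u * N u = 1 := fun u hu =>
    Matrix.mul_nonsing_inv _ (isUnit_iff_ne_zero.mpr (hBdet u hu))
  have hNM : ∀ u ∈ B, N u * M u = 1 := fun u hu =>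
    Matrix.nonsing_inv_mul _ (isUnit_iff_ne_zero.mpr (hBdet u hu))
  have hNdiff : ∀ i j, ∀ u ∈ B, DifferentiableAt ℂ (fun x => N x i j) u := by
    intro i j u hu
    have heq : (fun x => N x i j) =ᶠ[nhds u]
        (fun x => ((M x).det)⁻¹ * ((M x).updateRow j (Pi.single i 1)).det) := by
      filter_upwards [hBopen.mem_nhds hu] with x hx
      rw [hNdef]
      simp only [Matrix.inv_def, Ring.inverse_eq_inv, Matrix.smul_apply, smul_eq_mul,
        Matrix.adjugate_apply]
    refine (Filter.EventuallyEq.differentiableAt_iff heq).mpr ?_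
    refine DifferentiableAt.mul ?_ ?_
    · exact (differentiableAt_det_comp M (fun a b => hMdiff a b u (hBΔ hu))).inv (hBdet u hu)
    · refine differentiableAt_det_comp (fun x => (M x).updateRow j (Pi.single i 1)) ?_
      intro a b
      simp only [Matrix.updateRow_apply]
      split_ifs with h
      · exact differentiableAt_const _
      · exact hMdiff a b u (hBΔ hu)
  -- the normalized frame
  set w : Fin k → ℂ → (Fin n → ℂ) := fun i x => ∑ j, N x j i • v j x with hwdef
  set W' : Fin k → ℂ → (Fin n → ℂ) := fun i u =>
    ∑ j, (N u j i • deriv (v j) u + deriv (fun x => N x j i) u • v j u) with hW'def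
  have hw' : ∀ i, ∀ u ∈ B, HasDerivAt (w i) (W' i u) u := by
    intro i u hu
    exact HasDerivAt.fun_sum fun j _ =>
      HasDerivAt.smul ((hNdiff j i u hu).hasDerivAt) ((hvdiff j u (hBΔ hu)).hasDerivAt)
  have hW'span : ∀ i, ∀ u ∈ B, W' i u ∈ Submodule.span ℂ (Set.range fun j => v j u) := by
    intro i u hu
    refine Submodule.sum_mem _ fun j _ => Submodule.add_mem _ ?_ ?_
    · exact Submodule.smul_mem _ _ (hfocal j u (hBΔ hu))
    · exact Submodule.smul_mem _ _ (Submodule.subset_span ⟨j, rfl⟩)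
  -- the frame is normalized against the functionals
  have hφw : ∀ l i, ∀ u ∈ B, φ l (w i u) = (1 : Matrix (Fin k) (Fin k) ℂ) l i := by
    intro l i u hu
    rw [hwdef]
    simp only
    rw [map_sum, ← hMN u hu, Matrix.mul_apply]
    refine Finset.sum_congr rfl fun j _ => ?_
    rw [map_smul, smul_eq_mul, hM, mul_comm]
  -- derivative of the normalized frame is killed by the functionals
  have hφW' : ∀ l i, ∀ u ∈ B, φ l (W' i u) = 0 := by
    intro l i u hu
    have hD : HasDerivAt (fun x => φ l (w i x)) (φ l (W' i u)) u :=
      (φC l).hasFDerivAt.comp_hasDerivAt u (hw' i u hu)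
    have hconst : (fun x => φ l (w i x)) =ᶠ[nhds u]
        (fun _ => (1 : Matrix (Fin k) (Fin k) ℂ) l i) := by
      filter_upwards [hBopen.mem_nhds hu] with x hx
      exact hφw l i x hx
    have := hD.deriv
    rw [hconst.deriv_eq, deriv_const] at this
    exact this.symm
  -- hence the derivative vanishes
  have hW'0 : ∀ i, ∀ u ∈ B, W' i u = 0 := by
    intro i u hu
    obtain ⟨c, hc⟩ := (Submodule.mem_span_range_iff_exists_fun ℂ).mp (hW'span i u hu)
    have hmv : (M u).mulVec c = 0 := by
      funext l
      have h0 := hφW' l i u hu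
      rw [← hc, map_sum] at h0
      simp only [map_smul, smul_eq_mul] at h0
      rw [Matrix.mulVec, Pi.zero_apply, ← h0]
      simp only [dotProduct, hM]
      exact Finset.sum_congr rfl fun j _ => mul_comm _ _
    have hc0 : c = 0 := by
      have h1 := congrArg (fun y => (M u)⁻¹.mulVec y) hmv
      simpa [Matrix.mulVec_mulVec, Matrix.nonsing_inv_mul _
        (isUnit_iff_ne_zero.mpr (hBdet u hu))] using h1
    rw [← hc, hc0]
    simp
  -- the normalized frame is constant on the ball
  have hwconst : ∀ i, ∀ u ∈ B, w i u = w i u₀ := by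
    intro i u hu
    have hzero : ∀ x ∈ B, HasDerivAt (w i) 0 x := by
      intro x hx
      have := hw' i x hx
      rwa [hW'0 i x hx] at this
    have := Convex.norm_image_sub_le_of_norm_hasDerivWithin_le
      (f' := fun _ => (0 : Fin n → ℂ)) (C := 0)
      (fun x hx => (hzero x hx).hasDerivWithinAt) (fun x _ => by simp) (convex_ball u₀ ε)
      hu₀B hu
    simpa [sub_eq_zero] using this
  -- spans of v and w agree on the ball
  have hspan_vw : ∀ u ∈ B,
      Submodule.span ℂ (Set.range fun j => v j u)
        = Submodule.span ℂ (Set.range fun i => w i u) := by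
    intro u hu
    apply le_antisymm
    · rw [Submodule.span_le]
      rintro _ ⟨l, rfl⟩
      show v l u ∈ (Submodule.span ℂ (Set.range fun i => w i u) : Submodule ℂ (Fin n → ℂ))
      have hvl : v l u = ∑ i, M u i l • w i u := by
        have h1 : ∑ i, M u i l • w i u = ∑ j, ((N u * M u) j l) • v j u := by
          rw [hwdef]
          simp only [Finset.smul_sum, smul_smul]
          rw [Finset.sum_comm]
          refine Finset.sum_congr rfl fun j _ => ?_
          rw [Matrix.mul_apply, Finset.sum_smul]
          exact Finset.sum_congr rfl fun i _ => by rw [mul_comm]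
        rw [h1, hNM u hu]
        simp [Matrix.one_apply, ite_smul]
      rw [hvl]
      exact Submodule.sum_mem _ fun i _ =>
        Submodule.smul_mem _ _ (Submodule.subset_span ⟨i, rfl⟩)
    · rw [Submodule.span_le]
      rintro _ ⟨i, rfl⟩
      rw [hwdef]
      exact Submodule.sum_mem _ fun j _ =>
        Submodule.smul_mem _ _ (Submodule.subset_span ⟨j, rfl⟩)
  intro u hu
  have hrange : (Set.range fun i => w i u) = (Set.range fun i => w i u₀) := by
    have : (fun i => w i u) = fun i => w i u₀ := funext fun i => hwconst i u hu
    rw [this]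
  rw [hspan_vw u hu, hrange, ← hspan_vw u₀ hu₀B]

/-- A 1-parameter holomorphic family of (k−1)-planes of ℙⁿ⁻¹, all of whose points
are first-order focal points (the derivative of every spanning section stays in the
moving subspace), is a constant family: the moving k-dimensional subspace of ℂⁿ is
a fixed subspace `S`. -/
theorem developable_all_focal_constant_subspace
    (Δ : Set ℂ) (hne : Δ.Nonempty) (hconn : IsConnected Δ) (hopen : IsOpen Δ)
    (n k : ℕ) (hn : 1 ≤ n) (hk1 : 1 ≤ k) (hkn : k ≤ n)
    (v : Fin k → ℂ → (Fin n → ℂ))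
    (hdiff : ∀ i, DifferentiableOn ℂ (v i) Δ)
    (hindep : ∀ u ∈ Δ, LinearIndependent ℂ (fun i => v i u))
    (hfocal : ∀ i, ∀ u ∈ Δ,
      deriv (v i) u ∈ Submodule.span ℂ (Set.range (fun j => v j u))) :
    ∃ S : Submodule ℂ (Fin n → ℂ), Module.finrank ℂ S = k ∧
      ∀ u ∈ Δ, Submodule.span ℂ (Set.range (fun j => v j u)) = S := by
  obtain ⟨u₀, hu₀⟩ := hne
  set S : Submodule ℂ (Fin n → ℂ) :=
    Submodule.span ℂ (Set.range (fun j => v j u₀)) with hSdef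
  refine ⟨S, ?_, ?_⟩
  · rw [hSdef, finrank_span_eq_card (hindep u₀ hu₀), Fintype.card_fin]
  · set U : Set ℂ := {x | x ∈ Δ ∧ Submodule.span ℂ (Set.range (fun j => v j x)) = S} with hU
    set V : Set ℂ := {x | x ∈ Δ ∧ Submodule.span ℂ (Set.range (fun j => v j x)) ≠ S} with hV
    have hUopen : IsOpen U := by
      rw [Metric.isOpen_iff]
      rintro x ⟨hxΔ, hxS⟩
      obtain ⟨ε, hε, hballΔ, hconst⟩ := focal_key Δ hopen n k v hdiff hindep hfocal hxΔ
      exact ⟨ε, hε, fun y hy => ⟨hballΔ hy, by rw [hconst y hy, hxS]⟩⟩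
    have hVopen : IsOpen V := by
      rw [Metric.isOpen_iff]
      rintro x ⟨hxΔ, hxS⟩
      obtain ⟨ε, hε, hballΔ, hconst⟩ := focal_key Δ hopen n k v hdiff hindep hfocal hxΔ
      exact ⟨ε, hε, fun y hy => ⟨hballΔ hy, by rw [hconst y hy]; exact hxS⟩⟩
    have hdisj : Disjoint U V := by
      rw [Set.disjoint_left]
      rintro x ⟨_, hx⟩ ⟨_, hx'⟩
      exact hx' hx
    have hsub : Δ ⊆ U ∪ V := by
      intro x hx
      by_cases h : Submodule.span ℂ (Set.range (fun j => v j x)) = S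
      · exact Or.inl ⟨hx, h⟩
      · exact Or.inr ⟨hx, h⟩
    have hnonempty : (Δ ∩ U).Nonempty := ⟨u₀, hu₀, hu₀, rfl⟩
    have hΔU : Δ ⊆ U :=
      IsPreconnected.subset_left_of_subset_union hUopen hVopen hdisj hsub hnonempty
        hconn.isPreconnected
    exact fun u hu => (hΔU hu).2
end

section
/- Let Δ ⊆ ℂ be a nonempty connected open set and Q₁, Q₂, z : Δ → ℂ⁵ holomorphic maps, pointwise linearly independent; set Π(u) = span_ℂ{Q₁(u), Q₂(u), z(u)} and L(u) = span_ℂ{Q₁(u), Q₂(u)}. Assume Q₁'(u) ∈ Π(u) and Q₂'(u) ∈ Π(u) for every u ∈ Δ (L is a focal line of the family Π). Let P : Δ → ℂ⁵ be holomorphic with P(u) ∈ L(u) and P'(u) ∈ L(u) for every u ∈ Δ (P is a second-order focal point), and assume P(u), P'(u), P''(u) are linearly independent for every u ∈ Δ. Then for every u ∈ Δ one has L(u) = span_ℂ{P(u), P'(u)} and Π(u) = span_ℂ{P(u), P'(u), P''(u)}; that is, the family consists of the osculating planes to the curve traced by P, and the focal lines are its tangent lines. -/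
private lemma range_pair' {V : Type*} (a b : V) : Set.range ![a, b] = {a, b} := by
  ext x; simp; tauto

private lemma range_triple' {V : Type*} (a b c : V) : Set.range ![a, b, c] = {a, b, c} := by
  ext x; simp; tauto

private lemma li_pair {V : Type*} [AddCommGroup V] [Module ℂ V] {a b c : V}
    (h : LinearIndependent ℂ ![a, b, c]) : LinearIndependent ℂ ![a, b] := by
  have h2 := h.comp Fin.castSucc (Fin.castSucc_injective 2)
  have : ![a, b, c] ∘ Fin.castSucc = ![a, b] := by
    funext i; fin_cases i <;> rfl
  rwa [this] at h2

/-- Case 2(b) of Proposition 1.1.1: a 1-dimensional developable family of planes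
`Π(u) = span {Q₁ u, Q₂ u, z u}` with focal line `L(u) = span {Q₁ u, Q₂ u}` whose
second-order focal locus is a curve `P` consists of the osculating planes to `P`,
the focal lines being its tangent lines. -/
theorem developable_family_osculating_planes
    (Δ : Set ℂ) (hne : Δ.Nonempty) (hconn : IsConnected Δ) (hopen : IsOpen Δ)
    (Q₁ Q₂ z : ℂ → (Fin 5 → ℂ))
    (hQ₁ : DifferentiableOn ℂ Q₁ Δ) (hQ₂ : DifferentiableOn ℂ Q₂ Δ)
    (hz : DifferentiableOn ℂ z Δ)
    (hindep : ∀ u ∈ Δ, LinearIndependent ℂ ![Q₁ u, Q₂ u, z u])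
    (hfoc1 : ∀ u ∈ Δ,
      deriv Q₁ u ∈ Submodule.span ℂ ({Q₁ u, Q₂ u, z u} : Set (Fin 5 → ℂ)))
    (hfoc2 : ∀ u ∈ Δ,
      deriv Q₂ u ∈ Submodule.span ℂ ({Q₁ u, Q₂ u, z u} : Set (Fin 5 → ℂ)))
    (P : ℂ → (Fin 5 → ℂ)) (hP : DifferentiableOn ℂ P Δ)
    (hPL : ∀ u ∈ Δ, P u ∈ Submodule.span ℂ ({Q₁ u, Q₂ u} : Set (Fin 5 → ℂ)))
    (hP'L : ∀ u ∈ Δ, deriv P u ∈ Submodule.span ℂ ({Q₁ u, Q₂ u} : Set (Fin 5 → ℂ)))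
    (hPind : ∀ u ∈ Δ, LinearIndependent ℂ ![P u, deriv P u, deriv (deriv P) u]) :
    ∀ u ∈ Δ,
      Submodule.span ℂ ({Q₁ u, Q₂ u} : Set (Fin 5 → ℂ))
        = Submodule.span ℂ ({P u, deriv P u} : Set (Fin 5 → ℂ)) ∧
      Submodule.span ℂ ({Q₁ u, Q₂ u, z u} : Set (Fin 5 → ℂ))
        = Submodule.span ℂ ({P u, deriv P u, deriv (deriv P) u} : Set (Fin 5 → ℂ)) := by
  intro u₀ hu₀
  set L : Submodule ℂ (Fin 5 → ℂ) := Submodule.span ℂ ({Q₁ u₀, Q₂ u₀} : Set (Fin 5 → ℂ)) with hL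
  set Pl : Submodule ℂ (Fin 5 → ℂ) :=
    Submodule.span ℂ ({Q₁ u₀, Q₂ u₀, z u₀} : Set (Fin 5 → ℂ)) with hPl
  have hQpair : LinearIndependent ℂ ![Q₁ u₀, Q₂ u₀] := li_pair (hindep u₀ hu₀)
  have hPpair : LinearIndependent ℂ ![P u₀, deriv P u₀] := li_pair (hPind u₀ hu₀)
  -- differentiability facts
  have hQ₁at : DifferentiableAt ℂ Q₁ u₀ := hQ₁.differentiableAt (hopen.mem_nhds hu₀)
  have hQ₂at : DifferentiableAt ℂ Q₂ u₀ := hQ₂.differentiableAt (hopen.mem_nhds hu₀)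
  have hPa : AnalyticOnNhd ℂ P Δ := hP.analyticOnNhd hopen
  have hdP : ∀ u ∈ Δ, DifferentiableAt ℂ (deriv P) u :=
    fun u hu => ((hPa.deriv) u hu).differentiableAt
  -- nonzero 2×2 minor
  obtain ⟨i, j, hij⟩ : ∃ i j, Q₁ u₀ i * Q₂ u₀ j - Q₁ u₀ j * Q₂ u₀ i ≠ 0 := by
    by_contra hcon; push_neg at hcon
    have h2 := linearIndependent_fin2.mp hQpair
    simp only [Matrix.cons_val_one, Matrix.head_cons, Matrix.cons_val_zero] at h2
    obtain ⟨hb0, hall⟩ := h2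
    obtain ⟨j, hj⟩ : ∃ j, Q₂ u₀ j ≠ 0 := by
      by_contra h'; push_neg at h'; exact hb0 (funext h')
    apply hall (Q₁ u₀ j / Q₂ u₀ j)
    funext i
    have := hcon i j
    simp only [Pi.smul_apply, smul_eq_mul]
    field_simp
    linear_combination -this
  -- the local frame and second-order membership
  set dd : ℂ → ℂ := fun u => Q₁ u i * Q₂ u j - Q₁ u j * Q₂ u i with hdd
  have hddon : DifferentiableOn ℂ dd Δ := by
    apply DifferentiableOn.sub
    · exact ((differentiableOn_pi.mp hQ₁) i).mul ((differentiableOn_pi.mp hQ₂) j)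
    · exact ((differentiableOn_pi.mp hQ₁) j).mul ((differentiableOn_pi.mp hQ₂) i)
  set U : Set ℂ := Δ ∩ dd ⁻¹' ({0}ᶜ) with hU
  have hUopen : IsOpen U :=
    hddon.continuousOn.isOpen_inter_preimage hopen isOpen_compl_singleton
  have hu₀U : u₀ ∈ U := ⟨hu₀, hij⟩
  have hUnhds : U ∈ nhds u₀ := hUopen.mem_nhds hu₀U
  set a : ℂ → ℂ := fun u => (deriv P u i * Q₂ u j - deriv P u j * Q₂ u i) / dd u with ha
  set b : ℂ → ℂ := fun u => (Q₁ u i * deriv P u j - Q₁ u j * deriv P u i) / dd u with hb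
  have hrep : ∀ u ∈ U, deriv P u = a u • Q₁ u + b u • Q₂ u := by
    rintro u ⟨huΔ, hddu⟩
    have hddu' : dd u ≠ 0 := hddu
    obtain ⟨c₁, c₂, hc⟩ := Submodule.mem_span_pair.mp (hP'L u huΔ)
    have hci : deriv P u i = c₁ * Q₁ u i + c₂ * Q₂ u i := by
      rw [← hc]; simp
    have hcj : deriv P u j = c₁ * Q₁ u j + c₂ * Q₂ u j := by
      rw [← hc]; simp
    have hau : a u = c₁ := by
      rw [ha]; simp only []; rw [hci, hcj]
      field_simp [hdd]
      ring
    have hbu : b u = c₂ := by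
      rw [hb]; simp only []; rw [hci, hcj]
      field_simp [hdd]
      ring
    rw [hau, hbu, ← hc]
  have haat : DifferentiableAt ℂ a u₀ := by
    have h1 : DifferentiableAt ℂ (fun u => deriv P u i) u₀ :=
      differentiableAt_pi.mp (hdP u₀ hu₀) i
    have h2 : DifferentiableAt ℂ (fun u => deriv P u j) u₀ :=
      differentiableAt_pi.mp (hdP u₀ hu₀) j
    have h3 : DifferentiableAt ℂ (fun u => Q₂ u i) u₀ := differentiableAt_pi.mp hQ₂at i
    have h4 : DifferentiableAt ℂ (fun u => Q₂ u j) u₀ := differentiableAt_pi.mp hQ₂at j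
    exact ((h1.mul h4).sub (h2.mul h3)).div
      (hddon.differentiableAt (hopen.mem_nhds hu₀)) hij
  have hbat : DifferentiableAt ℂ b u₀ := by
    have h1 : DifferentiableAt ℂ (fun u => deriv P u i) u₀ :=
      differentiableAt_pi.mp (hdP u₀ hu₀) i
    have h2 : DifferentiableAt ℂ (fun u => deriv P u j) u₀ :=
      differentiableAt_pi.mp (hdP u₀ hu₀) j
    have h3 : DifferentiableAt ℂ (fun u => Q₁ u i) u₀ := differentiableAt_pi.mp hQ₁at i
    have h4 : DifferentiableAt ℂ (fun u => Q₁ u j) u₀ := differentiableAt_pi.mp hQ₁at j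
    exact ((h3.mul h2).sub (h4.mul h1)).div
      (hddon.differentiableAt (hopen.mem_nhds hu₀)) hij
  have heq : deriv P =ᶠ[nhds u₀] fun u => a u • Q₁ u + b u • Q₂ u :=
    Filter.eventuallyEq_of_mem hUnhds hrep
  have hP''mem : deriv (deriv P) u₀ ∈ Pl := by
    rw [heq.deriv_eq]
    rw [deriv_fun_add (haat.fun_smul hQ₁at) (hbat.fun_smul hQ₂at),
      deriv_fun_smul haat hQ₁at, deriv_fun_smul hbat hQ₂at]
    have m1 : Q₁ u₀ ∈ Pl := Submodule.subset_span (by simp)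
    have m2 : Q₂ u₀ ∈ Pl := Submodule.subset_span (by simp)
    exact Submodule.add_mem _
      (Submodule.add_mem _ (Pl.smul_mem _ (hfoc1 u₀ hu₀)) (Pl.smul_mem _ m1))
      (Submodule.add_mem _ (Pl.smul_mem _ (hfoc2 u₀ hu₀)) (Pl.smul_mem _ m2))
  -- dimension counts
  have hLP : L ≤ Pl := Submodule.span_mono (by intro x hx; simp only [Set.mem_insert_iff, Set.mem_singleton_iff] at hx ⊢; tauto)
  have hPmem : P u₀ ∈ L := hPL u₀ hu₀
  have hP'mem : deriv P u₀ ∈ L := hP'L u₀ hu₀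
  have finL : FiniteDimensional ℂ L := FiniteDimensional.span_of_finite ℂ (Set.toFinite _)
  have finPl : FiniteDimensional ℂ Pl := FiniteDimensional.span_of_finite ℂ (Set.toFinite _)
  have rkL : Module.finrank ℂ L = 2 := by
    rw [hL, ← range_pair' (Q₁ u₀) (Q₂ u₀), finrank_span_eq_card hQpair, Fintype.card_fin]
  have rkPl : Module.finrank ℂ Pl = 3 := by
    rw [hPl, ← range_triple' (Q₁ u₀) (Q₂ u₀) (z u₀),
      finrank_span_eq_card (hindep u₀ hu₀), Fintype.card_fin]
  have rkP2 : Module.finrank ℂ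
      (Submodule.span ℂ ({P u₀, deriv P u₀} : Set (Fin 5 → ℂ))) = 2 := by
    rw [← range_pair' (P u₀) (deriv P u₀), finrank_span_eq_card hPpair, Fintype.card_fin]
  have rkP3 : Module.finrank ℂ
      (Submodule.span ℂ ({P u₀, deriv P u₀, deriv (deriv P) u₀} : Set (Fin 5 → ℂ))) = 3 := by
    rw [← range_triple' (P u₀) (deriv P u₀) (deriv (deriv P) u₀),
      finrank_span_eq_card (hPind u₀ hu₀), Fintype.card_fin]
  constructor
  · refine (Submodule.eq_of_le_of_finrank_le ?_ ?_).symm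
    · rw [Submodule.span_le]; rintro x (rfl | rfl)
      · exact hPmem
      · exact hP'mem
    · rw [rkL, rkP2]
  · refine (Submodule.eq_of_le_of_finrank_le ?_ ?_).symm
    · rw [Submodule.span_le]; rintro x (rfl | rfl | rfl)
      · exact hLP hPmem
      · exact hLP hP'mem
      · exact hP''mem
    · rw [rkPl, rkP3]
end

section
/- Let f₁₁, f₁₂, f₂₁, f₂₂ : ℂ³ → ℂ be linear forms and define the quadratic form q(x) = f₁₁(x)·f₂₂(x) − f₁₂(x)·f₂₁(x). Then q is reducible — i.e., there exist linear forms l, m : ℂ³ → ℂ with q(x) = l(x)·m(x) for all x (including the case q = 0) — if and only if there exists (λ, μ) ∈ ℂ² ∖ {(0,0)} such that the two linear forms λ·f₁₁ + μ·f₂₁ and λ·f₁₂ + μ·f₂₂ are linearly dependent. -/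
open Module

private abbrev W := (Fin 3 → ℂ) →ₗ[ℂ] ℂ

private lemma not_li_pair_iff (u v : W) :
    ¬ LinearIndependent ℂ ![u, v] ↔ ∃ s t : ℂ, ¬(s = 0 ∧ t = 0) ∧ s • u + t • v = 0 := by
  rw [LinearIndependent.pair_iff]
  constructor
  · intro h
    push_neg at h
    obtain ⟨s, t, h1, h2⟩ := h
    exact ⟨s, t, fun hc => (h2 hc.1 hc.2).elim, h1⟩
  · rintro ⟨s, t, h1, h2⟩ h
    exact h1 (h s t h2)

private lemma quad_root (A B C : ℂ) :
    ∃ lam mu : ℂ, ¬(lam = 0 ∧ mu = 0) ∧ A*lam^2 + B*lam*mu + C*mu^2 = 0 := by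
  by_cases hA : A = 0
  · exact ⟨1, 0, by simp, by simp [hA]⟩
  · obtain ⟨s, hs⟩ := IsAlgClosed.exists_pow_nat_eq (k := ℂ) (B^2 - 4*A*C) two_pos
    refine ⟨(-B + s)/(2*A), 1, fun h => absurd h.2 one_ne_zero, ?_⟩
    field_simp
    linear_combination hs

private lemma not_li_of_det (e₁ e₂ u v : W) (α β γ δ : ℂ)
    (hu : u = α • e₁ + β • e₂) (hv : v = γ • e₁ + δ • e₂)
    (hdet : α * δ = β * γ) : ¬ LinearIndependent ℂ ![u, v] := by
  rw [not_li_pair_iff]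
  by_cases hγ : γ ≠ 0
  · refine ⟨γ, -α, fun h => hγ h.1, ?_⟩
    rw [hu, hv]
    match_scalars
    · ring
    · linear_combination -hdet
  · push_neg at hγ
    by_cases hδ : δ ≠ 0
    · refine ⟨δ, -β, fun h => hδ h.1, ?_⟩
      rw [hu, hv]
      match_scalars
      · linear_combination hdet
      · ring
    · push_neg at hδ
      refine ⟨0, 1, by simp, ?_⟩
      rw [hv, hγ, hδ]
      simp

set_option maxHeartbeats 1600000 in
/-- Pointwise content of Proposition 1.1.2: the focal conic
`f₁₁f₂₂ − f₁₂f₂₁ = 0` on ℙ² is degenerate (its equation is a product of two linear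
forms, possibly zero) if and only if there is a direction `(λ, μ) ≠ (0,0)` for which
the two linear forms `λf₁₁ + μf₂₁` and `λf₁₂ + μf₂₂` are linearly dependent, i.e.
a developable direction exists. -/
theorem focal_conic_degenerate_iff_developable_direction
    (f₁₁ f₁₂ f₂₁ f₂₂ : (Fin 3 → ℂ) →ₗ[ℂ] ℂ) :
    (∃ l m : (Fin 3 → ℂ) →ₗ[ℂ] ℂ, ∀ x : Fin 3 → ℂ,
        f₁₁ x * f₂₂ x - f₁₂ x * f₂₁ x = l x * m x) ↔
      (∃ lm : ℂ × ℂ, lm ≠ 0 ∧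
        ¬ LinearIndependent ℂ ![lm.1 • f₁₁ + lm.2 • f₂₁, lm.1 • f₁₂ + lm.2 • f₂₂]) := by
  constructor
  · rintro ⟨l, m, H⟩
    by_contra hR
    push_neg at hR
    -- every direction gives an independent pair
    have dep : ∀ lam mu s t : ℂ, ¬(lam = 0 ∧ mu = 0) →
        s • (lam • f₁₁ + mu • f₂₁) + t • (lam • f₁₂ + mu • f₂₂) = 0 → s = 0 ∧ t = 0 := by
      intro lam mu s t h1 h2
      have hli := hR (lam, mu) (by rw [Ne, Prod.mk_eq_zero]; exact h1)
      rw [LinearIndependent.pair_iff] at hli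
      exact hli s t h2
    -- a common zero of l and m
    obtain ⟨p, hp0, hl, hm⟩ : ∃ p : Fin 3 → ℂ, p ≠ 0 ∧ l p = 0 ∧ m p = 0 := by
      have hker : LinearMap.ker (l.prod m) ≠ ⊥ := by
        intro hbot
        have hinj : Function.Injective (l.prod m) := LinearMap.ker_eq_bot.mp hbot
        have hle := LinearMap.finrank_le_finrank_of_injective hinj
        simp only [Module.finrank_fin_fun, Module.finrank_prod, Module.finrank_self] at hle
        omega
      obtain ⟨p, hp, hp0⟩ := (Submodule.ne_bot_iff _).mp hker
      have hF : (l.prod m) p = 0 := LinearMap.mem_ker.mp hp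
      exact ⟨p, hp0, congrArg Prod.fst hF, congrArg Prod.snd hF⟩
    have hq0 : f₁₁ p * f₂₂ p - f₁₂ p * f₂₁ p = 0 := by
      linear_combination H p + m p * hl
    have hrel : ∀ x, f₂₂ p * f₁₁ x + f₁₁ p * f₂₂ x - f₂₁ p * f₁₂ x - f₁₂ p * f₂₁ x = 0 := by
      intro x
      have h2 := H (x + p)
      simp only [map_add, hl, hm, add_zero] at h2
      linear_combination h2 - H x - hq0
    by_cases hall : f₁₁ p = 0 ∧ f₁₂ p = 0 ∧ f₂₁ p = 0 ∧ f₂₂ p = 0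
    · -- all four forms vanish at p
      obtain ⟨ha, hb, hc, hd⟩ := hall
      have h21ne : f₂₁ ≠ 0 := by
        intro h
        have := dep 0 1 1 0 (by simp) (by simp [h])
        exact one_ne_zero this.1
      obtain ⟨y, hy⟩ : ∃ y, f₂₁ y ≠ 0 := by
        by_contra hcon
        push_neg at hcon
        exact h21ne (LinearMap.ext fun x => hcon x)
      obtain ⟨z, hz⟩ : ∃ z, f₂₂ z ≠ (f₂₂ y / f₂₁ y) * f₂₁ z := by
        by_contra hcon
        push_neg at hcon
        have heq : f₂₂ = (f₂₂ y / f₂₁ y) • f₂₁ := LinearMap.ext fun x => by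
          rw [hcon x]; simp [smul_eq_mul]
        have := dep 0 1 (f₂₂ y / f₂₁ y) (-1) (by simp)
          (by
            refine LinearMap.ext fun x => ?_
            simp only [LinearMap.add_apply, LinearMap.smul_apply, LinearMap.zero_apply,
              smul_eq_mul, zero_mul, one_mul, zero_add, neg_mul, mul_zero]
            rw [hcon x]
            ring)
        exact neg_ne_zero.mpr one_ne_zero this.2
      have hz'21 : f₂₁ (z - (f₂₁ z / f₂₁ y) • y) = 0 := by
        simp only [map_sub, map_smul, smul_eq_mul]
        field_simp
        ring
      have hz'22 : f₂₂ (z - (f₂₁ z / f₂₁ y) • y) ≠ 0 := by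
        simp only [map_sub, map_smul, smul_eq_mul]
        intro hcon
        apply hz
        field_simp [hy] at hcon ⊢
        linear_combination hcon
      obtain ⟨e₂, he21, he22⟩ : ∃ e₂ : Fin 3 → ℂ, f₂₁ e₂ = 0 ∧ f₂₂ e₂ = 1 := by
        refine ⟨(f₂₂ (z - (f₂₁ z / f₂₁ y) • y))⁻¹ • (z - (f₂₁ z / f₂₁ y) • y), ?_, ?_⟩
        · rw [map_smul, hz'21, smul_zero]
        · rw [map_smul, smul_eq_mul]
          exact inv_mul_cancel₀ hz'22
      obtain ⟨e₁, he11, he12⟩ : ∃ e₁ : Fin 3 → ℂ, f₂₁ e₁ = 1 ∧ f₂₂ e₁ = 0 := by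
        refine ⟨(f₂₁ y)⁻¹ • (y - f₂₂ y • e₂), ?_, ?_⟩
        · rw [map_smul, map_sub, map_smul, he21, smul_eq_mul, smul_eq_mul, mul_zero, sub_zero]
          exact inv_mul_cancel₀ hy
        · rw [map_smul, map_sub, map_smul, he22, smul_eq_mul, smul_eq_mul, mul_one, sub_self,
            mul_zero]
      have hli3 : LinearIndependent ℂ ![p, e₁, e₂] := by
        rw [Fintype.linearIndependent_iff]
        intro g hg
        rw [Fin.sum_univ_three] at hg
        simp only [Matrix.cons_val_zero, Matrix.cons_val_one, Matrix.head_cons,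
          Matrix.cons_val_two, Matrix.tail_cons] at hg
        have h1 : g 1 = 0 := by
          have := congrArg f₂₁ hg
          simpa [map_add, map_smul, smul_eq_mul, hc, he11, he21] using this
        have h2 : g 2 = 0 := by
          have := congrArg f₂₂ hg
          simpa [map_add, map_smul, smul_eq_mul, hd, he12, he22] using this
        have h0 : g 0 = 0 := by
          rw [h1, h2] at hg
          simp only [zero_smul, add_zero] at hg
          exact (smul_eq_zero.mp hg).resolve_right hp0
        intro i
        fin_cases i <;> assumption
      have hcard : Fintype.card (Fin 3) = finrank ℂ (Fin 3 → ℂ) := by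
        simp [Module.finrank_fin_fun]
      set bb := basisOfLinearIndependentOfCardEqFinrank hli3 hcard with hbb
      have hbeq : ∀ i, bb i = ![p, e₁, e₂] i := fun i => by
        rw [hbb, coe_basisOfLinearIndependentOfCardEqFinrank]
      have hf11 : f₁₁ = (f₁₁ e₁) • f₂₁ + (f₁₁ e₂) • f₂₂ := by
        refine bb.ext fun i => ?_
        rw [hbeq i]
        fin_cases i
        · simp [ha, hc, hd]
        · simp [he11, he12]
        · simp [he21, he22]
      have hf12 : f₁₂ = (f₁₂ e₁) • f₂₁ + (f₁₂ e₂) • f₂₂ := by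
        refine bb.ext fun i => ?_
        rw [hbeq i]
        fin_cases i
        · simp [hb, hc, hd]
        · simp [he11, he12]
        · simp [he21, he22]
      obtain ⟨lam, mu, hlm, hquad⟩ :=
        quad_root (f₁₁ e₁ * f₁₂ e₂ - f₁₁ e₂ * f₁₂ e₁) (f₁₁ e₁ + f₁₂ e₂) 1
      refine not_li_of_det f₂₁ f₂₂ (lam • f₁₁ + mu • f₂₁) (lam • f₁₂ + mu • f₂₂)
        (lam * f₁₁ e₁ + mu) (lam * f₁₁ e₂) (lam * f₁₂ e₁) (lam * f₁₂ e₂ + mu)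
        ?_ ?_ ?_ (hR (lam, mu) (by rw [Ne, Prod.mk_eq_zero]; exact hlm))
      · conv_lhs => rw [hf11]
        match_scalars <;> ring
      · conv_lhs => rw [hf12]
        match_scalars <;> ring
      · linear_combination hquad
    · -- some value at p is nonzero: a rank-one relation
      by_cases hd : f₂₂ p ≠ 0
      · have := dep (f₂₂ p) (-(f₁₂ p)) (f₂₂ p) (-(f₂₁ p)) (fun h => hd h.1)
          (by
            refine LinearMap.ext fun x => ?_
            simp only [LinearMap.add_apply, LinearMap.smul_apply, LinearMap.zero_apply,
              smul_eq_mul]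
            linear_combination f₂₂ p * hrel x - f₂₂ x * hq0)
        exact hd this.1
      · push_neg at hd
        by_cases hcc : f₂₁ p ≠ 0
        · have := dep (-(f₂₁ p)) (f₁₁ p) (f₂₂ p) (-(f₂₁ p)) (fun h => hcc (neg_eq_zero.mp h.1))
            (by
              refine LinearMap.ext fun x => ?_
              simp only [LinearMap.add_apply, LinearMap.smul_apply, LinearMap.zero_apply,
                smul_eq_mul]
              linear_combination (-(f₂₁ p)) * hrel x + f₂₁ x * hq0)
          exact hcc (neg_eq_zero.mp this.2)
        · push_neg at hcc
          by_cases hbb2 : f₁₂ p ≠ 0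
          · have := dep (f₂₂ p) (-(f₁₂ p)) (-(f₁₂ p)) (f₁₁ p) (fun h => hbb2 (neg_eq_zero.mp h.2))
              (by
                refine LinearMap.ext fun x => ?_
                simp only [LinearMap.add_apply, LinearMap.smul_apply, LinearMap.zero_apply,
                  smul_eq_mul]
                linear_combination (-(f₁₂ p)) * hrel x + f₁₂ x * hq0)
            exact hbb2 (neg_eq_zero.mp this.1)
          · push_neg at hbb2
            have ha : f₁₁ p ≠ 0 := by
              intro h
              exact hall ⟨h, hbb2, hcc, hd⟩
            have := dep (-(f₂₁ p)) (f₁₁ p) (-(f₁₂ p)) (f₁₁ p) (fun h => ha h.2)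
              (by
                refine LinearMap.ext fun x => ?_
                simp only [LinearMap.add_apply, LinearMap.smul_apply, LinearMap.zero_apply,
                  smul_eq_mul]
                linear_combination f₁₁ p * hrel x - f₁₁ x * hq0)
            exact ha this.2
  · rintro ⟨⟨lam, mu⟩, hne, hdep⟩
    rw [not_li_pair_iff] at hdep
    obtain ⟨s, t, hst, hsum⟩ := hdep
    have hlm : ¬(lam = 0 ∧ mu = 0) := by
      rw [Ne, Prod.mk_eq_zero] at hne
      exact hne
    have hrel : ∀ x, s * (lam * f₁₁ x + mu * f₂₁ x) + t * (lam * f₁₂ x + mu * f₂₂ x) = 0 := by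
      intro x
      have h0 := LinearMap.congr_fun hsum x
      simp only [LinearMap.add_apply, LinearMap.smul_apply, LinearMap.zero_apply,
        smul_eq_mul] at h0
      linear_combination h0
    by_cases hs0 : s = 0
    · have ht0 : t ≠ 0 := fun h => hst ⟨hs0, h⟩
      have hg2 : ∀ x, lam * f₁₂ x + mu * f₂₂ x = 0 := by
        intro x
        have := hrel x
        rw [hs0] at this
        simp only [zero_mul, zero_add] at this
        exact (mul_eq_zero.mp this).resolve_left ht0
      by_cases hlam : lam = 0
      · have hmu : mu ≠ 0 := fun h => hlm ⟨hlam, h⟩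
        have h22 : ∀ x, f₂₂ x = 0 := by
          intro x
          have := hg2 x
          rw [hlam] at this
          simp only [zero_mul, zero_add] at this
          exact (mul_eq_zero.mp this).resolve_left hmu
        refine ⟨-f₁₂, f₂₁, fun x => ?_⟩
        simp [h22 x]
      · refine ⟨lam • f₁₁ + mu • f₂₁, lam⁻¹ • f₂₂, fun x => ?_⟩
        simp only [LinearMap.add_apply, LinearMap.smul_apply, smul_eq_mul]
        have hinv : lam * lam⁻¹ = 1 := mul_inv_cancel₀ hlam
        linear_combination (-(f₁₁ x * f₂₂ x - f₁₂ x * f₂₁ x)) * hinv +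
          (-(lam⁻¹ * f₂₁ x)) * hg2 x
    · by_cases hlam : lam = 0
      · have hmu : mu ≠ 0 := fun h => hlm ⟨hlam, h⟩
        have hg : ∀ x, s * f₂₁ x + t * f₂₂ x = 0 := by
          intro x
          have h2 : mu * (s * f₂₁ x + t * f₂₂ x) = 0 := by
            have := hrel x
            rw [hlam] at this
            linear_combination this
          exact (mul_eq_zero.mp h2).resolve_left hmu
        refine ⟨f₂₂, s⁻¹ • (s • f₁₁ + t • f₁₂), fun x => ?_⟩
        simp only [LinearMap.add_apply, LinearMap.smul_apply, smul_eq_mul]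
        have hinv : s * s⁻¹ = 1 := mul_inv_cancel₀ hs0
        linear_combination (-(f₁₁ x * f₂₂ x - f₁₂ x * f₂₁ x)) * hinv +
          (-(s⁻¹ * f₁₂ x)) * hg x
      · refine ⟨lam • f₁₂ + mu • f₂₂, (lam * s)⁻¹ • ((-t) • f₂₂ + (-s) • f₂₁), fun x => ?_⟩
        simp only [LinearMap.add_apply, LinearMap.smul_apply, LinearMap.neg_apply, smul_eq_mul,
          neg_mul]
        have hinv : (lam * s) * (lam * s)⁻¹ = 1 := mul_inv_cancel₀ (mul_ne_zero hlam hs0)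
        linear_combination (-(f₁₁ x * f₂₂ x - f₁₂ x * f₂₁ x)) * hinv +
          ((lam * s)⁻¹ * f₂₂ x) * hrel x
end

section
/- Let f₁₂, f₂₁, f₂₂ : ℂ³ → ℂ be linear forms and a ∈ ℂ with a ≠ 0; set f₁₁ = a·f₂₁. Assume f₁₂ and f₂₂ are linearly independent and f₂₁ ∉ span_ℂ{f₁₂, f₂₂}. Then: (1) for (λ, μ) ∈ ℂ² ∖ {(0,0)}, the forms λ·f₁₁ + μ·f₂₁ and λ·f₁₂ + μ·f₂₂ are linearly dependent if and only if μ = −a·λ (there is exactly one developable direction); (2) the focal conic satisfies f₁₁·f₂₂ − f₁₂·f₂₁ = f₂₁·(a·f₂₂ − f₁₂), where the linear forms f₂₁ and a·f₂₂ − f₁₂ are linearly independent (the conic is a pair of distinct lines); (3) for every (λ, μ) ∈ ℂ² ∖ {(0,0)} with μ ≠ −a·λ, the forms λ·f₁₁ + μ·f₂₁ and λ·f₁₂ + μ·f₂₂ are linearly independent, so their common kernel {x ∈ ℂ³ : f₂₁(x) = 0 and λ·f₁₂(x) + μ·f₂₂(x) = 0} is 1-dimensional (the focal locus for that direction is a single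 point). -/
/-- First case of §1.2 (α-congruences): when exactly one of the two pencils
degenerates (`f₁₁ = a • f₂₁` with `f₁₂, f₂₂` independent and
`f₂₁ ∉ span {f₁₂, f₂₂}`), there is exactly one developable direction, the focal
conic is a pair of distinct lines, and for every other direction the focal locus is
a single point. -/
theorem one_pencil_degenerates_alpha_case
    (f₁₂ f₂₁ f₂₂ : (Fin 3 → ℂ) →ₗ[ℂ] ℂ) (a : ℂ) (ha : a ≠ 0)
    (f₁₁ : (Fin 3 → ℂ) →ₗ[ℂ] ℂ) (hf₁₁ : f₁₁ = a • f₂₁)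
    (hind : LinearIndependent ℂ ![f₁₂, f₂₂])
    (hnot : f₂₁ ∉ Submodule.span ℂ ({f₁₂, f₂₂} : Set ((Fin 3 → ℂ) →ₗ[ℂ] ℂ))) :
    -- (1) exactly one developable direction
    (∀ l m : ℂ, (l, m) ≠ ((0 : ℂ), (0 : ℂ)) →
      (¬ LinearIndependent ℂ ![l • f₁₁ + m • f₂₁, l • f₁₂ + m • f₂₂] ↔ m = -a * l)) ∧
    -- (2) the focal conic is a pair of distinct lines
    ((∀ x : Fin 3 → ℂ,
        f₁₁ x * f₂₂ x - f₁₂ x * f₂₁ x = f₂₁ x * (a * f₂₂ x - f₁₂ x)) ∧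
      LinearIndependent ℂ ![f₂₁, a • f₂₂ - f₁₂]) ∧
    -- (3) for every other direction, the focal locus is a single point
    (∀ l m : ℂ, (l, m) ≠ ((0 : ℂ), (0 : ℂ)) → m ≠ -a * l →
      LinearIndependent ℂ ![l • f₁₁ + m • f₂₁, l • f₁₂ + m • f₂₂] ∧
      Module.finrank ℂ
        ((LinearMap.ker f₂₁ ⊓ LinearMap.ker (l • f₁₂ + m • f₂₂)) :
          Submodule ℂ (Fin 3 → ℂ)) = 1) := by
  have hpair : ∀ s t : ℂ, s • f₁₂ + t • f₂₂ = 0 → s = 0 ∧ t = 0 :=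
    fun s t h => LinearIndependent.pair_iff.mp hind s t h
  -- triple independence of f₂₁, f₁₂, f₂₂
  have triple : ∀ s t u : ℂ, s • f₂₁ + t • f₁₂ + u • f₂₂ = 0 →
      s = 0 ∧ t = 0 ∧ u = 0 := by
    intro s t u h
    by_cases hs : s = 0
    · subst hs
      have h' : t • f₁₂ + u • f₂₂ = 0 := by
        have := h; rwa [zero_smul, zero_add] at this
      obtain ⟨ht, hu⟩ := hpair t u h'
      exact ⟨rfl, ht, hu⟩
    · exfalso
      apply hnot
      rw [Submodule.mem_span_pair]
      refine ⟨-(t / s), -(u / s), ?_⟩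
      have := congrArg (fun z => (s⁻¹ : ℂ) • z) h
      simp only [smul_add, smul_smul, smul_zero] at this
      rw [inv_mul_cancel₀ hs, one_smul] at this
      have h2 : f₂₁ = -((s⁻¹ * t) • f₁₂) - (s⁻¹ * u) • f₂₂ := by
        have : f₂₁ + (s⁻¹ * t) • f₁₂ + (s⁻¹ * u) • f₂₂ = 0 := this
        linear_combination (norm := module) this
      rw [h2]
      rw [div_eq_inv_mul, div_eq_inv_mul]
      module
  -- key independence lemma
  have key : ∀ l m : ℂ, (l, m) ≠ ((0 : ℂ), (0 : ℂ)) → m ≠ -a * l →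
      LinearIndependent ℂ ![l • f₁₁ + m • f₂₁, l • f₁₂ + m • f₂₂] := by
    intro l m hlm hm
    rw [LinearIndependent.pair_iff]
    intro s t h
    have h' : (s * (a * l + m)) • f₂₁ + (t * l) • f₁₂ + (t * m) • f₂₂ = 0 := by
      rw [hf₁₁] at h
      linear_combination (norm := module) h
    obtain ⟨h1, h2, h3⟩ := triple _ _ _ h'
    have hal : a * l + m ≠ 0 := fun hc => hm (by linear_combination hc)
    have hs : s = 0 := by
      rcases mul_eq_zero.mp h1 with h | h
      · exact h
      · exact absurd h hal
    have ht : t = 0 := by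
      by_contra htne
      have hl0 : l = 0 := by
        rcases mul_eq_zero.mp h2 with h | h
        · exact absurd h htne
        · exact h
      have hm0 : m = 0 := by
        rcases mul_eq_zero.mp h3 with h | h
        · exact absurd h htne
        · exact h
      exact hlm (by rw [hl0, hm0])
    exact ⟨hs, ht⟩
  refine ⟨?_, ⟨?_, ?_⟩, ?_⟩
  · -- (1)
    intro l m hlm
    constructor
    · intro hdep
      by_contra hm
      exact hdep (key l m hlm hm)
    · intro hm hindep
      have h0 : l • f₁₁ + m • f₂₁ = 0 := by
        rw [hf₁₁, hm]
        module
      have := hindep.ne_zero 0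
      simp only [Matrix.cons_val_zero] at this
      exact this h0
  · -- (2a)
    intro x
    rw [hf₁₁]
    simp only [LinearMap.smul_apply, smul_eq_mul]
    ring
  · -- (2b)
    rw [LinearIndependent.pair_iff]
    intro s t h
    have h' : s • f₂₁ + (-t) • f₁₂ + (t * a) • f₂₂ = 0 := by
      linear_combination (norm := module) h
    obtain ⟨h1, h2, h3⟩ := triple _ _ _ h'
    exact ⟨h1, by linear_combination -h2⟩
  · -- (3)
    intro l m hlm hm
    refine ⟨key l m hlm hm, ?_⟩
    set g := l • f₁₂ + m • f₂₂ with hg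
    have hindfg : LinearIndependent ℂ ![f₂₁, g] := by
      rw [LinearIndependent.pair_iff]
      intro s t h
      have h' : s • f₂₁ + (t * l) • f₁₂ + (t * m) • f₂₂ = 0 := by
        rw [hg] at h
        linear_combination (norm := module) h
      obtain ⟨h1, h2, h3⟩ := triple _ _ _ h'
      refine ⟨h1, ?_⟩
      by_contra htne
      have hl0 : l = 0 := by
        rcases mul_eq_zero.mp h2 with h | h
        · exact absurd h htne
        · exact h
      have hm0 : m = 0 := by
        rcases mul_eq_zero.mp h3 with h | h
        · exact absurd h htne
        · exact h
      exact hlm (by rw [hl0, hm0])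
    -- the intersection of kernels is the dual coannihilator of span {f₂₁, g}
    have hker : (LinearMap.ker f₂₁ ⊓ LinearMap.ker g : Submodule ℂ (Fin 3 → ℂ)) =
        (Submodule.span ℂ ({f₂₁, g} : Set (Module.Dual ℂ (Fin 3 → ℂ)))).dualCoannihilator := by
      ext x
      simp only [Submodule.mem_inf, LinearMap.mem_ker, Submodule.mem_dualCoannihilator]
      constructor
      · rintro ⟨h1, h2⟩ φ hφ
        induction hφ using Submodule.span_induction with
        | mem φ hφ =>
          rcases hφ with h | h
          · subst h; exact h1
          · simp only [Set.mem_singleton_iff] at h; subst h; exact h2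
        | zero => simp
        | add φ ψ _ _ ih1 ih2 => simp [ih1, ih2]
        | smul c φ _ ih => simp [ih]
      · intro h
        exact ⟨h f₂₁ (Submodule.subset_span (by simp)),
          h g (Submodule.subset_span (by simp))⟩
    rw [hker]
    have hspan : Submodule.span ℂ ({f₂₁, g} : Set (Module.Dual ℂ (Fin 3 → ℂ))) =
        Submodule.span ℂ (Set.range ![f₂₁, g]) := by
      rw [Matrix.range_cons_cons_empty]
    have hrank2 : Module.finrank ℂ
        (Submodule.span ℂ ({f₂₁, g} : Set (Module.Dual ℂ (Fin 3 → ℂ)))) = 2 := by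
      rw [hspan, finrank_span_eq_card hindfg]
      simp
    have := Subspace.finrank_add_finrank_dualCoannihilator_eq
      (Submodule.span ℂ ({f₂₁, g} : Set (Module.Dual ℂ (Fin 3 → ℂ))))
    rw [hrank2] at this
    have hV : Module.finrank ℂ (Fin 3 → ℂ) = 3 := by simp
    omega
end

section
/- Let f₂₁, f₂₂ : ℂ³ → ℂ be linearly independent linear forms and a, b ∈ ℂ with a ≠ 0, b ≠ 0 and a ≠ b; set f₁₁ = a·f₂₁ and f₁₂ = b·f₂₂. Then: (1) for (λ, μ) ∈ ℂ² ∖ {(0,0)}, the forms λ·f₁₁ + μ·f₂₁ and λ·f₁₂ + μ·f₂₂ are linearly dependent if and only if μ = −a·λ or μ = −b·λ (there are exactly two distinct developable directions); (2) the focal conic satisfies f₁₁·f₂₂ − f₁₂·f₂₁ = (a − b)·f₂₁·f₂₂, a nonzero product of two linearly independent linear forms (a pair of distinct lines); (3) for every (λ, μ) ∈ ℂ² ∖ {(0,0)} with μ ≠ −a·λ and μ ≠ −b·λ, the forms λ·f₁₁ + μ·f₂₁ and λ·f₁₂ + μ·f₂₂ are linearly independent and their common kernel equals ker f₂₁ ∩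 ker f₂₂, a 1-dimensional subspace independent of (λ, μ) (the focal locus is the same single point, the singular point of the conic, for every nondevelopable direction). -/

lemma aux_pair_smul_indep {f g : (Fin 3 → ℂ) →ₗ[ℂ] ℂ}
    (h : LinearIndependent ℂ ![f, g]) {c d : ℂ} (hc : c ≠ 0) (hd : d ≠ 0) :
    LinearIndependent ℂ ![c • f, d • g] := by
  rw [LinearIndependent.pair_iff] at h ⊢
  intro s t hst
  have h2 := h (s * c) (t * d) (by rw [mul_smul, mul_smul]; exact hst)
  exact ⟨by rcases mul_eq_zero.1 h2.1 with h' | h' <;> tauto,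
    by rcases mul_eq_zero.1 h2.2 with h' | h' <;> tauto⟩

lemma aux_surj {f g : (Fin 3 → ℂ) →ₗ[ℂ] ℂ} (h : LinearIndependent ℂ ![f, g]) :
    Function.Surjective (f.prod g) := by
  rw [← LinearMap.range_eq_top]
  by_contra hne
  obtain ⟨φ, hφ0, hφ⟩ := Submodule.exists_dual_map_eq_bot_of_lt_top
    (lt_top_iff_ne_top.2 hne) inferInstance
  have key : ∀ z : ℂ × ℂ, φ z = z.1 * φ (1, 0) + z.2 * φ (0, 1) := by
    intro z
    have hz : z = z.1 • ((1 : ℂ), (0 : ℂ)) + z.2 • ((0 : ℂ), (1 : ℂ)) := by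
      ext <;> simp
    rw [hz, map_add, map_smul, map_smul, smul_eq_mul, smul_eq_mul]
    simp [hz.symm]
  have hvan : ∀ x, φ (f x, g x) = 0 := by
    intro x
    have hmem : (f x, g x) ∈ LinearMap.range (f.prod g) := ⟨x, rfl⟩
    have := Submodule.mem_map_of_mem (f := φ) hmem
    rw [hφ, Submodule.mem_bot] at this
    exact this
  have heq : φ (1, 0) • f + φ (0, 1) • g = 0 := by
    refine LinearMap.ext fun x => ?_
    have := hvan x
    rw [key] at this
    simp only [LinearMap.add_apply, LinearMap.smul_apply, smul_eq_mul,
      LinearMap.zero_apply]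
    linear_combination this
  obtain ⟨h1, h2⟩ := LinearIndependent.pair_iff.1 h _ _ heq
  apply hφ0
  refine LinearMap.ext fun z => ?_
  rw [key, h1, h2]; simp
  
lemma aux_finrank {f g : (Fin 3 → ℂ) →ₗ[ℂ] ℂ} (h : LinearIndependent ℂ ![f, g]) :
    Module.finrank ℂ ((LinearMap.ker f ⊓ LinearMap.ker g) : Submodule ℂ (Fin 3 → ℂ)) = 1 := by
  have hker : LinearMap.ker (f.prod g) = LinearMap.ker f ⊓ LinearMap.ker g :=
    LinearMap.ker_prod f g
  have h1 := (f.prod g).finrank_range_add_finrank_ker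
  rw [LinearMap.range_eq_top.2 (aux_surj h), hker] at h1
  simp only [finrank_top, Module.finrank_prod, Module.finrank_self,
    Module.finrank_fin_fun] at h1
  omega

/-- Second case of §1.2 (β-congruences): when both pencils degenerate with distinct
ratios (`f₁₁ = a • f₂₁`, `f₁₂ = b • f₂₂`, `a ≠ b`, `f₂₁, f₂₂` independent), there
are exactly two distinct developable directions, the focal conic is a pair of
distinct lines, and for every other direction the focal locus is the same single
point, the singular point of the conic. -/
theorem two_pencils_degenerate_beta_case
    (f₂₁ f₂₂ : (Fin 3 → ℂ) →ₗ[ℂ] ℂ)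
    (hind : LinearIndependent ℂ ![f₂₁, f₂₂])
    (a b : ℂ) (ha : a ≠ 0) (hb : b ≠ 0) (hab : a ≠ b)
    (f₁₁ f₁₂ : (Fin 3 → ℂ) →ₗ[ℂ] ℂ)
    (hf₁₁ : f₁₁ = a • f₂₁) (hf₁₂ : f₁₂ = b • f₂₂) :
    -- (1) exactly two distinct developable directions
    (∀ l m : ℂ, (l, m) ≠ ((0 : ℂ), (0 : ℂ)) →
      (¬ LinearIndependent ℂ ![l • f₁₁ + m • f₂₁, l • f₁₂ + m • f₂₂] ↔
        (m = -a * l ∨ m = -b * l))) ∧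
    -- (2) the focal conic is a nonzero product of two independent linear forms
    ((∀ x : Fin 3 → ℂ,
        f₁₁ x * f₂₂ x - f₁₂ x * f₂₁ x = (a - b) * (f₂₁ x * f₂₂ x)) ∧ a - b ≠ 0) ∧
    -- (3) for every other direction, the focal locus is the fixed singular point
    (∀ l m : ℂ, (l, m) ≠ ((0 : ℂ), (0 : ℂ)) → m ≠ -a * l → m ≠ -b * l →
      LinearIndependent ℂ ![l • f₁₁ + m • f₂₁, l • f₁₂ + m • f₂₂] ∧
      (LinearMap.ker (l • f₁₁ + m • f₂₁) ⊓ LinearMap.ker (l • f₁₂ + m • f₂₂) :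
          Submodule ℂ (Fin 3 → ℂ))
        = LinearMap.ker f₂₁ ⊓ LinearMap.ker f₂₂ ∧
      Module.finrank ℂ
        ((LinearMap.ker f₂₁ ⊓ LinearMap.ker f₂₂) : Submodule ℂ (Fin 3 → ℂ)) = 1) := by
  subst hf₁₁ hf₁₂
  have key1 : ∀ l m : ℂ, l • (a • f₂₁) + m • f₂₁ = (l * a + m) • f₂₁ := fun l m => by
    rw [smul_smul, add_smul]
  have key2 : ∀ l m : ℂ, l • (b • f₂₂) + m • f₂₂ = (l * b + m) • f₂₂ := fun l m => by
    rw [smul_smul, add_smul]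
  have eqa : ∀ l m : ℂ, m = -a * l ↔ l * a + m = 0 := fun l m => by
    constructor <;> intro h <;> linear_combination h
  have eqb : ∀ l m : ℂ, m = -b * l ↔ l * b + m = 0 := fun l m => by
    constructor <;> intro h <;> linear_combination h
  refine ⟨?_, ⟨fun x => by simp only [LinearMap.smul_apply, smul_eq_mul]; ring,
      sub_ne_zero.2 hab⟩, ?_⟩
  · intro l m hlm
    rw [key1, key2]
    constructor
    · intro hnot
      by_contra hcon
      push_neg at hcon
      exact hnot (aux_pair_smul_indep hind ((not_iff_not.2 (eqa l m)).1 hcon.1)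
        ((not_iff_not.2 (eqb l m)).1 hcon.2))
    · rintro (h | h) hli
      · exact hli.ne_zero 0 (by simp [(eqa l m).1 h])
      · exact hli.ne_zero 1 (by simp [(eqb l m).1 h])
  · intro l m hlm hma hmb
    have hc : l * a + m ≠ 0 := (not_iff_not.2 (eqa l m)).1 hma
    have hd : l * b + m ≠ 0 := (not_iff_not.2 (eqb l m)).1 hmb
    rw [key1, key2]
    exact ⟨aux_pair_smul_indep hind hc hd,
      by rw [LinearMap.ker_smul _ _ hc, LinearMap.ker_smul _ _ hd],
      aux_finrank hind⟩
end
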